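/- arXiv:2310.06192 — 5 statements merged into one kernel-verified Lean document; each statement's English description precedes it below -/
import Mathlib

section
/- For every d with 1 ≤ d ≤ 20, the d-dimensional hypercube Q^d is stackable. -/
/-- A cup-stacking move in graph `G`: all cups from `u` are moved to `v`, where
`u ≠ v`, both have at least one cup, and `dist G u v = C u`. -/
def CupMove {V : Type*} [DecidableEq V] (G : SimpleGraph V) (C C' : V → ℕ) : Prop :=
  ∃ u v : V, u ≠ v ∧ 1 ≤ C u ∧ 1 ≤ C v ∧ G.dist u v = C u ∧
    ∀ w, C' w = if w = u then 0 else if w = v then C u + C v else C w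

/-- `G` is `(C, r)`-stackable: some finite sequence of cup-stacking moves starting
from `C` reaches the configuration with all `|C|` cups on `r` and none elsewhere. -/
def IsStackableConf {V : Type*} [Fintype V] [DecidableEq V]
    (G : SimpleGraph V) (C : V → ℕ) (r : V) : Prop :=
  Relation.ReflTransGen (CupMove G) C (fun w => if w = r then ∑ v, C v else 0)

/-- `G` is `r`-stackable: `(𝟏, r)`-stackable where `𝟏` has one cup on each vertex. -/
def IsStackableAt {V : Type*} [Fintype V] [DecidableEq V]
    (G : SimpleGraph V) (r : V) : Prop :=
  IsStackableConf G (fun _ => 1) r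

/-- `G` is stackable: `r`-stackable for every vertex `r`. -/
def IsStackable {V : Type*} [Fintype V] [DecidableEq V] (G : SimpleGraph V) : Prop :=
  ∀ r : V, IsStackableAt G r

open scoped symmDiff in
/-- The d-dimensional hypercube: vertices are subsets of {1,…,d}, adjacent iff
the symmetric difference has exactly one element. -/
def cubeGraph (d : ℕ) : SimpleGraph (Finset (Fin d)) :=
  SimpleGraph.fromRel (fun X Y => (X ∆ Y).card = 1)

open scoped symmDiff
open Finset

set_option maxRecDepth 40000

namespace CupStack

/-! ### symmDiff helpers -/

lemma sdr {α : Type*} [DecidableEq α] (P Q R : Finset α) : (P ∆ R) ∆ (Q ∆ R) = P ∆ Q := by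
  ext x; simp only [Finset.mem_symmDiff]; tauto

lemma sdc {α : Type*} [DecidableEq α] (P R : Finset α) : (P ∆ R) ∆ R = P := by
  ext x; simp only [Finset.mem_symmDiff]; tauto

lemma unsd {α : Type*} [DecidableEq α] {P Q T : Finset α} (h1 : Disjoint T P) (h2 : Disjoint T Q) :
    (P ∪ T) ∆ (Q ∪ T) = P ∆ Q := by
  ext x
  have h1' : x ∈ T → x ∉ P := fun hx => Finset.disjoint_left.mp h1 hx
  have h2' : x ∈ T → x ∉ Q := fun hx => Finset.disjoint_left.mp h2 hx
  simp only [Finset.mem_symmDiff, Finset.mem_union]; tauto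

lemma sd_triangle {α : Type*} [DecidableEq α] (A B C : Finset α) :
    (A ∆ C).card ≤ (A ∆ B).card + (B ∆ C).card := by
  have h : A ∆ C = (A ∆ B) ∆ (B ∆ C) := by
    ext x; simp only [Finset.mem_symmDiff]; tauto
  rw [h]
  exact le_trans (Finset.card_le_card (by
    intro x hx
    rw [Finset.mem_symmDiff] at hx
    rw [Finset.mem_union]
    tauto)) (Finset.card_union_le _ _)

/-! ### cube distance -/

lemma cube_adj {d : ℕ} {X Y : Finset (Fin d)} :
    (cubeGraph d).Adj X Y ↔ (X ∆ Y).card = 1 := by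
  rw [cubeGraph, SimpleGraph.fromRel_adj]
  constructor
  · rintro ⟨hne, h | h⟩
    · exact h
    · rwa [symmDiff_comm]
  · intro h
    refine ⟨?_, Or.inl h⟩
    rintro rfl
    simp at h

lemma cube_exists_walk {d : ℕ} (n : ℕ) :
    ∀ X Y : Finset (Fin d), (X ∆ Y).card = n → ∃ w : (cubeGraph d).Walk X Y, w.length = n := by
  induction n with
  | zero =>
    intro X Y h
    rw [Finset.card_eq_zero] at h
    have hXY : X = Y := by
      rwa [← Finset.bot_eq_empty, symmDiff_eq_bot] at h
    subst hXY
    exact ⟨SimpleGraph.Walk.nil, rfl⟩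
  | succ n ih =>
    intro X Y h
    have hne : (X ∆ Y).Nonempty := by
      rw [← Finset.card_pos, h]; omega
    obtain ⟨a, ha⟩ := hne
    set X' := X ∆ {a} with hX'
    have hadj : (cubeGraph d).Adj X X' := by
      rw [cube_adj]
      have : X ∆ X' = {a} := by
        rw [hX', symmDiff_symmDiff_cancel_left]
      rw [this, Finset.card_singleton]
    have hcard : (X' ∆ Y).card = n := by
      have h2 : X' ∆ Y = (X ∆ Y) ∆ {a} := by
        rw [hX']
        ext x; simp only [Finset.mem_symmDiff, Finset.mem_singleton]; tauto
      have h3 : (X ∆ Y) ∆ {a} = (X ∆ Y).erase a := by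
        ext x
        rcases eq_or_ne x a with rfl | hxa
        · simp [Finset.mem_symmDiff, ha]
        · simp [Finset.mem_symmDiff, hxa]
      rw [h2, h3, Finset.card_erase_of_mem ha, h]
      rfl
    obtain ⟨w, hw⟩ := ih X' Y hcard
    exact ⟨SimpleGraph.Walk.cons hadj w, by simp [hw]⟩

lemma cube_walk_le {d : ℕ} {X Y : Finset (Fin d)} (w : (cubeGraph d).Walk X Y) :
    (X ∆ Y).card ≤ w.length := by
  induction w with
  | nil => simp
  | @cons X Z Y hadj w ih =>
    rw [cube_adj] at hadj
    calc (X ∆ Y).card ≤ (X ∆ Z).card + (Z ∆ Y).card := sd_triangle _ _ _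
    _ ≤ 1 + w.length := by omega
    _ = (SimpleGraph.Walk.cons _ w).length := by simp [Nat.add_comm]

lemma cube_dist {d : ℕ} (X Y : Finset (Fin d)) :
    (cubeGraph d).dist X Y = (X ∆ Y).card := by
  obtain ⟨w, hw⟩ := cube_exists_walk (X ∆ Y).card X Y rfl
  refine le_antisymm (hw ▸ SimpleGraph.dist_le w) ?_
  have hreach : (cubeGraph d).Reachable X Y := ⟨w⟩
  obtain ⟨p, hp⟩ := hreach.exists_walk_length_eq_dist
  calc (X ∆ Y).card ≤ p.length := cube_walk_le p
  _ = _ := hp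

/-! ### Sweep -/

def Sweep {V : Type*} [DecidableEq V] (G : SimpleGraph V) (R : Finset V) (r : V) : Prop :=
  r ∉ R ∧ ∀ C : V → ℕ, (∀ v ∈ R, C v = 1) → 1 ≤ C r →
    Relation.ReflTransGen (CupMove G) C
      (fun v => if v ∈ R then 0 else if v = r then C r + R.card else C v)

lemma sweep_empty {V : Type*} [DecidableEq V] (G : SimpleGraph V) (r : V) :
    Sweep G ∅ r := by
  refine ⟨Finset.notMem_empty r, fun C h1 hr => ?_⟩
  have : (fun v => if v ∈ (∅ : Finset V) then 0 else if v = r then C r + (∅ : Finset V).card else C v) = C := by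
    funext v
    simp only [Finset.notMem_empty, if_false, Finset.card_empty, Nat.add_zero]
    split <;> simp_all
  rw [this]

lemma sweep_union {V : Type*} [DecidableEq V] {G : SimpleGraph V} {R₁ R₂ : Finset V} {r : V}
    (hd : Disjoint R₁ R₂) (h1 : Sweep G R₁ r) (h2 : Sweep G R₂ r) :
    Sweep G (R₁ ∪ R₂) r := by
  obtain ⟨hr1, hs1⟩ := h1
  obtain ⟨hr2, hs2⟩ := h2
  refine ⟨by simp [hr1, hr2], fun C hC hCr => ?_⟩
  have step1 := hs1 C (fun v hv => hC v (Finset.mem_union_left _ hv)) hCr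
  set C₁ : V → ℕ := fun v => if v ∈ R₁ then 0 else if v = r then C r + R₁.card else C v with hC₁
  have hC₁R₂ : ∀ v ∈ R₂, C₁ v = 1 := by
    intro v hv
    have hv1 : v ∉ R₁ := Finset.disjoint_right.mp hd hv
    have hvr : v ≠ r := fun h => hr2 (h ▸ hv)
    simp [hC₁, hv1, hvr, hC v (Finset.mem_union_right _ hv)]
  have hC₁r : 1 ≤ C₁ r := by
    have h : C₁ r = C r + R₁.card := by simp [hC₁, hr1]
    omega
  have step2 := hs2 C₁ hC₁R₂ hC₁r
  have hfin : (fun v => if v ∈ R₂ then 0 else if v = r then C₁ r + R₂.card else C₁ v)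
      = (fun v => if v ∈ R₁ ∪ R₂ then 0 else if v = r then C r + (R₁ ∪ R₂).card else C v) := by
    funext v
    by_cases hv2 : v ∈ R₂
    · simp [hv2, Finset.mem_union]
    · by_cases hvr : v = r
      · subst hvr
        simp [hC₁, hr1, hr2, Finset.mem_union, Finset.card_union_of_disjoint hd, Nat.add_assoc]
      · by_cases hv1 : v ∈ R₁ <;> simp [hC₁, hv1, hv2, hvr, Finset.mem_union]
  rw [hfin] at step2
  exact step1.trans step2

/-! ### move-list engine -/

def enc {M : ℕ} (X : Finset (Fin M)) : ℕ := ∑ i ∈ X, 2 ^ (i : ℕ)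

def go {M : ℕ} (j : ℕ) :
    List ((Finset (Fin M) × ℕ) × Option (Finset (Fin M) × ℕ) × ℕ × ℕ) →
      (ℕ → ℕ) → Bool
  | [], A => decide (∀ v : Finset (Fin M), A (enc v) = 0)
  | ((u, mu), some (v, mv), nu, nv) :: L, A =>
      decide (u ≠ v) && decide (enc u = mu) && decide (enc v = mv) &&
        decide (A mu = nu) && decide (A mv = nv) && decide (1 ≤ nu) &&
        decide (1 ≤ nv) && decide ((u ∆ v).card = nu) &&
        go j L (fun w => if w = mu then 0 else if w = mv then nu + nv else A w)
  | ((u, mu), none, nu, _) :: L, A =>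
      decide (enc u = mu) && decide (A mu = nu) && decide (1 ≤ nu) &&
        decide (u.card + j = nu) && go j L (fun w => if w = mu then 0 else A w)

def chk (M j : ℕ) (L : List ((Finset (Fin M) × ℕ) × Option (Finset (Fin M) × ℕ) × ℕ × ℕ)) :
    Bool :=
  go j L (fun _ => 1)

lemma go_reach {d M j : ℕ} (henc : Function.Injective (enc (M := M)))
    (φ : Finset (Fin M) → Finset (Fin d)) (r : Finset (Fin d))
    (hinj : Function.Injective φ)
    (hdist : ∀ X Y : Finset (Fin M), (cubeGraph d).dist (φ X) (φ Y) = (X ∆ Y).card)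
    (hroot : ∀ X : Finset (Fin M), (cubeGraph d).dist (φ X) r = X.card + j)
    (hner : ∀ X, φ X ≠ r) :
    ∀ (L : List ((Finset (Fin M) × ℕ) × Option (Finset (Fin M) × ℕ) × ℕ × ℕ)) (A : ℕ → ℕ)
      (C : Finset (Fin d) → ℕ), go j L A = true → (∀ X, C (φ X) = A (enc X)) → 1 ≤ C r →
      Relation.ReflTransGen (CupMove (cubeGraph d)) C
        (fun w => if w = r then C r + ∑ X : Finset (Fin M), A (enc X)
          else if w ∈ Finset.univ.image φ then 0 else C w) := by
  intro L
  induction L with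
  | nil =>
    intro A C hgo hrel hCr
    simp only [go, decide_eq_true_eq] at hgo
    have hsum : ∑ X : Finset (Fin M), A (enc X) = 0 :=
      Finset.sum_eq_zero (fun x _ => hgo x)
    have hfun : (fun w => if w = r then C r + ∑ X : Finset (Fin M), A (enc X)
        else if w ∈ Finset.univ.image φ then 0 else C w) = C := by
      funext w
      by_cases hwr : w = r
      · subst hwr; simp [hsum]
      · simp only [if_neg hwr]
        by_cases hw : w ∈ Finset.univ.image φ
        · rw [if_pos hw]
          obtain ⟨X, _, rfl⟩ := Finset.mem_image.mp hw
          have h1 := hrel X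
          have h2 := hgo X
          omega
        · rw [if_neg hw]
    rw [hfun]
  | cons p L ih =>
    obtain ⟨⟨u, mu⟩, t, nu, nv⟩ := p
    cases t with
    | some vp =>
      obtain ⟨v, mv⟩ := vp
      intro A C hgo hrel hCr
      simp only [go, Bool.and_eq_true, decide_eq_true_eq] at hgo
      obtain ⟨⟨⟨⟨⟨⟨⟨⟨hne, hmu⟩, hmv⟩, hAu⟩, hAv⟩, hnu⟩, hnv⟩, hdc⟩, hgo'⟩ := hgo
      subst hmu
      subst hmv
      set A' : ℕ → ℕ :=
        fun w => if w = enc u then 0 else if w = enc v then nu + nv else A w with hA'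
      set C' : Finset (Fin d) → ℕ :=
        fun w => if w = φ u then 0 else if w = φ v then C (φ u) + C (φ v) else C w with hC'
      have hφne : φ u ≠ φ v := fun h => hne (hinj h)
      have hmove : CupMove (cubeGraph d) C C' := by
        refine ⟨φ u, φ v, hφne, ?_, ?_, ?_, fun w => rfl⟩
        · rw [hrel u, hAu]; exact hnu
        · rw [hrel v, hAv]; exact hnv
        · rw [hdist u v, hrel u, hAu]; exact hdc
      have hrel' : ∀ X, C' (φ X) = A' (enc X) := by
        intro X
        rcases eq_or_ne X u with rfl | hXu
        · simp [hC', hA']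
        · rcases eq_or_ne X v with hXv | hXv
          · rw [hXv]
            have h1' : φ v ≠ φ u := fun h => hXu (hXv ▸ hinj h)
            have hvu' : enc v ≠ enc u := fun h => hXu (hXv.trans (henc h))
            simp [hC', hA', h1', hvu', hrel u, hrel v, hAu, hAv]
          · have h1 : φ X ≠ φ u := fun h => hXu (hinj h)
            have h2 : φ X ≠ φ v := fun h => hXv (hinj h)
            have h1e : enc X ≠ enc u := fun h => hXu (henc h)
            have h2e : enc X ≠ enc v := fun h => hXv (henc h)
            simp only [hC', hA', if_neg h1, if_neg h2, if_neg h1e, if_neg h2e]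
            exact hrel X
      have hC'rC : C' r = C r := by
        simp only [hC', if_neg (Ne.symm (hner u)), if_neg (Ne.symm (hner v))]
      have hC'r : 1 ≤ C' r := by rw [hC'rC]; exact hCr
      have hvu : v ≠ u := Ne.symm hne
      have s1 : A (enc v) + ∑ X ∈ (Finset.univ.erase u).erase v, A (enc X)
          = ∑ X ∈ Finset.univ.erase u, A (enc X) :=
        Finset.add_sum_erase _ (fun X => A (enc X))
          (Finset.mem_erase.mpr ⟨hvu, Finset.mem_univ v⟩)
      have s2 : A (enc u) + ∑ X ∈ Finset.univ.erase u, A (enc X)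
          = ∑ X : Finset (Fin M), A (enc X) :=
        Finset.add_sum_erase _ (fun X => A (enc X)) (Finset.mem_univ u)
      have s1' : A' (enc v) + ∑ X ∈ (Finset.univ.erase u).erase v, A' (enc X)
          = ∑ X ∈ Finset.univ.erase u, A' (enc X) :=
        Finset.add_sum_erase _ (fun X => A' (enc X))
          (Finset.mem_erase.mpr ⟨hvu, Finset.mem_univ v⟩)
      have s2' : A' (enc u) + ∑ X ∈ Finset.univ.erase u, A' (enc X)
          = ∑ X : Finset (Fin M), A' (enc X) :=
        Finset.add_sum_erase _ (fun X => A' (enc X)) (Finset.mem_univ u)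
      have scongr : ∑ X ∈ (Finset.univ.erase u).erase v, A' (enc X)
          = ∑ X ∈ (Finset.univ.erase u).erase v, A (enc X) := by
        refine Finset.sum_congr rfl (fun x hx => ?_)
        simp only [Finset.mem_erase] at hx
        have h1e : enc x ≠ enc u := fun h => hx.2.1 (henc h)
        have h2e : enc x ≠ enc v := fun h => hx.1 (henc h)
        simp [hA', h1e, h2e]
      have hA'u : A' (enc u) = 0 := by simp [hA']
      have hA'v : A' (enc v) = nu + nv := by
        have hvu' : enc v ≠ enc u := fun h => hvu (henc h)
        simp [hA', hvu']
      have hsum : ∑ X : Finset (Fin M), A' (enc X) = ∑ X : Finset (Fin M), A (enc X) := by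
        omega
      have ihres := ih A' C' hgo' hrel' hC'r
      refine Relation.ReflTransGen.head hmove ?_
      have halign : (fun w => if w = r then C' r + ∑ X : Finset (Fin M), A' (enc X)
          else if w ∈ Finset.univ.image φ then 0 else C' w)
          = (fun w => if w = r then C r + ∑ X : Finset (Fin M), A (enc X)
          else if w ∈ Finset.univ.image φ then 0 else C w) := by
        funext w
        by_cases hwr : w = r
        · subst hwr; rw [if_pos rfl, if_pos rfl, hC'rC, hsum]
        · simp only [if_neg hwr]
          by_cases hw : w ∈ Finset.univ.image φ
          · rw [if_pos hw, if_pos hw]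
          · rw [if_neg hw, if_neg hw]
            have h1 : w ≠ φ u := fun h => hw (h ▸ Finset.mem_image_of_mem φ (Finset.mem_univ u))
            have h2 : w ≠ φ v := fun h => hw (h ▸ Finset.mem_image_of_mem φ (Finset.mem_univ v))
            simp [hC', h1, h2]
      rw [halign] at ihres
      exact ihres
    | none =>
      intro A C hgo hrel hCr
      simp only [go, Bool.and_eq_true, decide_eq_true_eq] at hgo
      obtain ⟨⟨⟨⟨hmu, hAu⟩, hnu⟩, hdc⟩, hgo'⟩ := hgo
      subst hmu
      set A' : ℕ → ℕ := fun w => if w = enc u then 0 else A w with hA'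
      set C' : Finset (Fin d) → ℕ :=
        fun w => if w = φ u then 0 else if w = r then C (φ u) + C r else C w with hC'
      have hmove : CupMove (cubeGraph d) C C' := by
        refine ⟨φ u, r, hner u, ?_, hCr, ?_, fun w => rfl⟩
        · rw [hrel u, hAu]; exact hnu
        · rw [hroot u, hrel u, hAu]; exact hdc
      have hrel' : ∀ X, C' (φ X) = A' (enc X) := by
        intro X
        rcases eq_or_ne X u with rfl | hXu
        · simp [hC', hA']
        · have h1 : φ X ≠ φ u := fun h => hXu (hinj h)
          have h1e : enc X ≠ enc u := fun h => hXu (henc h)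
          simp only [hC', hA', if_neg h1, if_neg (hner X), if_neg h1e]
          exact hrel X
      have hC'rC : C' r = C (φ u) + C r := by
        have hne1 : r ≠ φ u := Ne.symm (hner u)
        simp [hC', hne1]
      have hC'r : 1 ≤ C' r := by omega
      have s2 : A (enc u) + ∑ X ∈ Finset.univ.erase u, A (enc X)
          = ∑ X : Finset (Fin M), A (enc X) :=
        Finset.add_sum_erase _ (fun X => A (enc X)) (Finset.mem_univ u)
      have s2' : A' (enc u) + ∑ X ∈ Finset.univ.erase u, A' (enc X)
          = ∑ X : Finset (Fin M), A' (enc X) :=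
        Finset.add_sum_erase _ (fun X => A' (enc X)) (Finset.mem_univ u)
      have scongr : ∑ X ∈ Finset.univ.erase u, A' (enc X)
          = ∑ X ∈ Finset.univ.erase u, A (enc X) := by
        refine Finset.sum_congr rfl (fun x hx => ?_)
        simp only [Finset.mem_erase] at hx
        have h1e : enc x ≠ enc u := fun h => hx.1 (henc h)
        simp [hA', h1e]
      have hA'u : A' (enc u) = 0 := by simp [hA']
      have hCφu : C (φ u) = A (enc u) := hrel u
      have ihres := ih A' C' hgo' hrel' hC'r
      refine Relation.ReflTransGen.head hmove ?_
      have halign : (fun w => if w = r then C' r + ∑ X : Finset (Fin M), A' (enc X)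
          else if w ∈ Finset.univ.image φ then 0 else C' w)
          = (fun w => if w = r then C r + ∑ X : Finset (Fin M), A (enc X)
          else if w ∈ Finset.univ.image φ then 0 else C w) := by
        funext w
        by_cases hwr : w = r
        · subst hwr
          rw [if_pos rfl, if_pos rfl, hC'rC]
          omega
        · simp only [if_neg hwr]
          by_cases hw : w ∈ Finset.univ.image φ
          · rw [if_pos hw, if_pos hw]
          · rw [if_neg hw, if_neg hw]
            have h1 : w ≠ φ u := fun h => hw (h ▸ Finset.mem_image_of_mem φ (Finset.mem_univ u))
            simp [hC', h1, hwr]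
      rw [halign] at ihres
      exact ihres

/-! ### regions -/

def region {d : ℕ} (r T S : Finset (Fin d)) : Finset (Finset (Fin d)) :=
  S.powerset.image (fun A => (A ∪ T) ∆ r)

def region' {d : ℕ} (r S : Finset (Fin d)) : Finset (Finset (Fin d)) :=
  (S.powerset.erase ∅).image (fun A => A ∆ r)

lemma sd_cancel_inj {d : ℕ} {r P Q : Finset (Fin d)} (h : P ∆ r = Q ∆ r) : P = Q := by
  have := congrArg (fun Z => Z ∆ r) h
  simpa only [sdc] using this

lemma certSweep {d : ℕ} (M j : ℕ)
    (L : List ((Finset (Fin M) × ℕ) × Option (Finset (Fin M) × ℕ) × ℕ × ℕ))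
    (hL : chk M j L = true) (henc : Function.Injective (enc (M := M)))
    {r T S : Finset (Fin d)} (hdisj : Disjoint T S)
    (hT : T.card = j) (hS : S.card = M) (hj : 1 ≤ j) :
    Sweep (cubeGraph d) (region r T S) r := by
  classical
  set e : Fin M → Fin d := fun i => S.orderEmbOfFin hS i with he
  have he_inj : Function.Injective e := (S.orderEmbOfFin hS).injective
  have he_mem : ∀ i, e i ∈ S := fun i => Finset.orderEmbOfFin_mem S hS i
  have hrange : ∀ y ∈ S, ∃ i, e i = y := by
    intro y hy
    have h := Finset.range_orderEmbOfFin S hS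
    have : y ∈ Set.range (S.orderEmbOfFin hS) := by rw [h]; exact hy
    obtain ⟨i, hi⟩ := this
    exact ⟨i, hi⟩
  set φ : Finset (Fin M) → Finset (Fin d) := fun X => (X.image e ∪ T) ∆ r with hφ
  have himg : ∀ X : Finset (Fin M), X.image e ⊆ S := by
    intro X y hy
    obtain ⟨i, _, rfl⟩ := Finset.mem_image.mp hy
    exact he_mem i
  have hTdisj : ∀ X : Finset (Fin M), Disjoint T (X.image e) := fun X =>
    Finset.disjoint_of_subset_right (himg X) hdisj
  have hsurj : ∀ A : Finset (Fin d), A ⊆ S → ∃ X : Finset (Fin M), X.image e = A := by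
    intro A hA
    refine ⟨Finset.univ.filter (fun i => e i ∈ A), ?_⟩
    ext y
    simp only [Finset.mem_image, Finset.mem_filter, Finset.mem_univ, true_and]
    constructor
    · rintro ⟨i, hi, rfl⟩; exact hi
    · intro hy
      obtain ⟨i, rfl⟩ := hrange y (hA hy)
      exact ⟨i, hy, rfl⟩
  have himage : Finset.univ.image φ = region r T S := by
    ext B
    simp only [Finset.mem_image, Finset.mem_univ, true_and, region, Finset.mem_powerset]
    constructor
    · rintro ⟨X, rfl⟩; exact ⟨X.image e, himg X, rfl⟩
    · rintro ⟨A, hA, rfl⟩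
      obtain ⟨X, rfl⟩ := hsurj A hA
      exact ⟨X, rfl⟩
  have hinj : Function.Injective φ := by
    intro X Y hXY
    have h1 : X.image e ∪ T = Y.image e ∪ T := sd_cancel_inj hXY
    have h2 : X.image e = Y.image e := by
      ext y
      have hyT1 : y ∈ T → y ∉ X.image e := fun h => Finset.disjoint_left.mp (hTdisj X) h
      have hyT2 : y ∈ T → y ∉ Y.image e := fun h => Finset.disjoint_left.mp (hTdisj Y) h
      have h3 := Finset.ext_iff.mp h1 y
      simp only [Finset.mem_union] at h3
      tauto
    have : Function.Injective (Finset.image e) := Finset.image_injective he_inj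
    exact this h2
  have hdistφ : ∀ X Y, (cubeGraph d).dist (φ X) (φ Y) = (X ∆ Y).card := by
    intro X Y
    rw [cube_dist, hφ]
    simp only
    rw [sdr, unsd (hTdisj X) (hTdisj Y), ← Finset.image_symmDiff _ _ he_inj,
      Finset.card_image_of_injective _ he_inj]
  have hrootφ : ∀ X, (cubeGraph d).dist (φ X) r = X.card + j := by
    intro X
    rw [cube_dist]
    have h1 : φ X ∆ r = X.image e ∪ T := sdc _ _
    rw [h1, Finset.card_union_of_disjoint (hTdisj X).symm,
      Finset.card_image_of_injective _ he_inj, hT]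
  have hner : ∀ X, φ X ≠ r := by
    intro X h
    have h1 : φ X ∆ r = (∅ : Finset (Fin d)) := by rw [h, symmDiff_self]; rfl
    have h2 : X.image e ∪ T = (∅ : Finset (Fin d)) := by rw [← (sdc (X.image e ∪ T) r)]; exact h1
    have h3 : T = ∅ := Finset.subset_empty.mp (h2 ▸ Finset.subset_union_right)
    rw [h3] at hT
    simp at hT
    omega
  have hrnot : r ∉ region r T S := by
    rw [← himage]
    intro hmem
    obtain ⟨X, _, hX⟩ := Finset.mem_image.mp hmem
    exact hner X hX
  refine ⟨hrnot, fun C hC hCr => ?_⟩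
  have hstart : ∀ X : Finset (Fin M), C (φ X) = (fun _ : ℕ => (1:ℕ)) (enc X) := by
    intro X
    refine hC _ ?_
    rw [← himage]
    exact Finset.mem_image_of_mem φ (Finset.mem_univ X)
  have main := go_reach henc φ r hinj hdistφ hrootφ hner L (fun _ => 1) C hL hstart hCr
  have hcard : (region r T S).card = ∑ _X : Finset (Fin M), (1:ℕ) := by
    rw [← himage, Finset.card_image_of_injective _ hinj, Finset.sum_const, smul_eq_mul,
      Nat.mul_one, Finset.card_univ]
  convert main using 1
  funext w
  by_cases hwr : w = r
  · subst hwr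
    rw [if_neg hrnot, if_pos rfl, if_pos rfl, hcard]
  · by_cases hw : w ∈ region r T S
    · have hw' : w ∈ Finset.univ.image φ := by rw [himage]; exact hw
      rw [if_pos hw, if_neg hwr, if_pos hw']
    · have hw' : w ∉ Finset.univ.image φ := by rw [himage]; exact hw
      rw [if_neg hw, if_neg hwr, if_neg hwr, if_neg hw']

/-! ### region splitting -/

lemma region_split {d : ℕ} {S T : Finset (Fin d)} (r : Finset (Fin d)) {a : Fin d}
    (ha : a ∈ S) (hdisj : Disjoint T S) :
    region r T S = region r T (S.erase a) ∪ region r (insert a T) (S.erase a) := by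
  conv_lhs => rw [region, ← Finset.insert_erase ha, Finset.powerset_insert,
    Finset.image_union, Finset.image_image]
  congr 1
  refine Finset.image_congr ?_
  intro A hA
  simp only [Function.comp_apply]
  rw [Finset.insert_union, Finset.union_insert]

lemma region_split_disjoint {d : ℕ} {S T : Finset (Fin d)} (r : Finset (Fin d)) {a : Fin d}
    (ha : a ∈ S) (hdisj : Disjoint T S) :
    Disjoint (region r T (S.erase a)) (region r (insert a T) (S.erase a)) := by
  rw [Finset.disjoint_left]
  intro x hx1 hx2
  obtain ⟨A, hA, rfl⟩ := Finset.mem_image.mp hx1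
  obtain ⟨B, hB, hBx⟩ := Finset.mem_image.mp hx2
  have heq : B ∪ insert a T = A ∪ T := sd_cancel_inj hBx
  have haB : a ∈ B ∪ insert a T := Finset.mem_union_right _ (Finset.mem_insert_self a T)
  rw [heq] at haB
  rcases Finset.mem_union.mp haB with h | h
  · exact (Finset.mem_erase.mp (Finset.mem_powerset.mp hA h)).1 rfl
  · exact (Finset.disjoint_left.mp hdisj h) ha

lemma region'_split {d : ℕ} {S : Finset (Fin d)} (r : Finset (Fin d)) {a : Fin d}
    (ha : a ∉ S) :
    region' r (insert a S) = region' r S ∪ region r {a} S := by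
  rw [region', Finset.powerset_insert, Finset.erase_union_distrib]
  have h1 : (S.powerset.image (insert a)).erase ∅ = S.powerset.image (insert a) := by
    refine Finset.erase_eq_of_notMem ?_
    intro h
    obtain ⟨A, _, hA⟩ := Finset.mem_image.mp h
    exact (Finset.insert_ne_empty a A) hA
  rw [h1, Finset.image_union, Finset.image_image]
  rw [region', region]
  congr 1
  refine Finset.image_congr ?_
  intro A hA
  simp only [Function.comp_apply]
  congr 1
  rw [Finset.union_comm]
  rfl

lemma region'_split_disjoint {d : ℕ} {S : Finset (Fin d)} (r : Finset (Fin d)) {a : Fin d}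
    (ha : a ∉ S) :
    Disjoint (region' r S) (region r {a} S) := by
  rw [Finset.disjoint_left]
  intro x hx1 hx2
  obtain ⟨A, hA, rfl⟩ := Finset.mem_image.mp hx1
  obtain ⟨B, hB, hBx⟩ := Finset.mem_image.mp hx2
  have heq : B ∪ {a} = A := sd_cancel_inj hBx
  have haA : a ∈ A := heq ▸ Finset.mem_union_right _ (Finset.mem_singleton_self a)
  have hA' : A ⊆ S := Finset.mem_powerset.mp (Finset.mem_of_mem_erase hA)
  exact ha (hA' haA)

lemma enc_inj0 : Function.Injective (enc (M := 0)) := by decide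
lemma enc_inj1 : Function.Injective (enc (M := 1)) := by decide
lemma enc_inj2 : Function.Injective (enc (M := 2)) := by decide
lemma enc_inj3 : Function.Injective (enc (M := 3)) := by decide
lemma enc_inj4 : Function.Injective (enc (M := 4)) := by decide
lemma enc_inj5 : Function.Injective (enc (M := 5)) := by decide
lemma enc_inj6 : Function.Injective (enc (M := 6)) := by decide

def c0_1 : List ((Finset (Fin 0) × ℕ) × Option (Finset (Fin 0) × ℕ) × ℕ × ℕ) :=
  [((∅, 0), none, 1, 0)]

lemma hc0_1 : chk 0 1 c0_1 = true := by decide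

def c1_1 : List ((Finset (Fin 1) × ℕ) × Option (Finset (Fin 1) × ℕ) × ℕ × ℕ) :=
  [((∅, 0), some ({0}, 1), 1, 1),
  (({0}, 1), none, 2, 0)]

lemma hc1_1 : chk 1 1 c1_1 = true := by decide

def c2_1 : List ((Finset (Fin 2) × ℕ) × Option (Finset (Fin 2) × ℕ) × ℕ × ℕ) :=
  [(({0}, 1), some ({0,1}, 3), 1, 1),
  (({1}, 2), some ({0,1}, 3), 1, 2),
  (({0,1}, 3), none, 3, 0),
  ((∅, 0), none, 1, 0)]

lemma hc2_1 : chk 2 1 c2_1 = true := by decide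

def c3_1 : List ((Finset (Fin 3) × ℕ) × Option (Finset (Fin 3) × ℕ) × ℕ × ℕ) :=
  [(({2}, 4), some ({0,2}, 5), 1, 1),
  (({0,2}, 5), some (∅, 0), 2, 1),
  ((∅, 0), some ({0,1,2}, 7), 3, 1),
  (({0,1,2}, 7), none, 4, 0),
  (({0,1}, 3), some ({0}, 1), 1, 1),
  (({0}, 1), none, 2, 0),
  (({1,2}, 6), some ({1}, 2), 1, 1),
  (({1}, 2), none, 2, 0)]

lemma hc3_1 : chk 3 1 c3_1 = true := by decide

def c4_1 : List ((Finset (Fin 4) × ℕ) × Option (Finset (Fin 4) × ℕ) × ℕ × ℕ) :=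
  [(({0}, 1), some (∅, 0), 1, 1),
  ((∅, 0), some ({1,2}, 6), 2, 1),
  (({1,2}, 6), some ({0,1,3}, 11), 3, 1),
  (({0,1,3}, 11), none, 4, 0),
  (({2}, 4), some ({0,2}, 5), 1, 1),
  (({0,2}, 5), some ({0,3}, 9), 2, 1),
  (({0,3}, 9), some ({0,1,2}, 7), 3, 1),
  (({0,1,2}, 7), none, 4, 0),
  (({1}, 2), some ({1,3}, 10), 1, 1),
  (({1,3}, 10), some ({0,1}, 3), 2, 1),
  (({0,1}, 3), some ({0,2,3}, 13), 3, 1),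
  (({0,2,3}, 13), none, 4, 0),
  (({2,3}, 12), some ({3}, 8), 1, 1),
  (({3}, 8), some ({1,2,3}, 14), 2, 1),
  (({0,1,2,3}, 15), some ({1,2,3}, 14), 1, 3),
  (({1,2,3}, 14), none, 4, 0)]

lemma hc4_1 : chk 4 1 c4_1 = true := by decide

def c5_1 : List ((Finset (Fin 5) × ℕ) × Option (Finset (Fin 5) × ℕ) × ℕ × ℕ) :=
  [(({0,4}, 17), some ({0,3,4}, 25), 1, 1),
  (({0,3,4}, 25), some ({0,2,4}, 21), 2, 1),
  (({0,2,4}, 21), some ({1,2,3,4}, 30), 3, 1),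
  (({1,2,3,4}, 30), some (∅, 0), 4, 1),
  ((∅, 0), some ({0,1,2,3,4}, 31), 5, 1),
  (({0,1,2,3,4}, 31), none, 6, 0),
  (({2,3}, 12), some ({2}, 4), 1, 1),
  (({2}, 4), some ({2,3,4}, 28), 2, 1),
  (({2,3,4}, 28), some ({1,3}, 10), 3, 1),
  (({1,3}, 10), some ({0,2,3,4}, 29), 4, 1),
  (({0,2,3,4}, 29), none, 5, 0),
  (({0,3}, 9), some ({0,1,3}, 11), 1, 1),
  (({0,1,3}, 11), some ({1,3,4}, 26), 2, 1),
  (({1,3,4}, 26), some ({2,4}, 20), 3, 1),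
  (({2,4}, 20), some ({0,1,3,4}, 27), 4, 1),
  (({0,1,3,4}, 27), none, 5, 0),
  (({0,2}, 5), some ({0}, 1), 1, 1),
  (({0}, 1), some ({1}, 2), 2, 1),
  (({1}, 2), some ({0,1,2,4}, 23), 3, 1),
  (({1,2,4}, 22), some ({0,1,2,4}, 23), 1, 4),
  (({0,1,2,4}, 23), none, 5, 0),
  (({0,1,2}, 7), some ({0,1}, 3), 1, 1),
  (({0,1}, 3), some ({1,4}, 18), 2, 1),
  (({1,4}, 18), some ({1,2,3}, 14), 3, 1),
  (({1,2,3}, 14), none, 4, 0),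
  (({0,2,3}, 13), some ({0,1,2,3}, 15), 1, 1),
  (({0,1,2,3}, 15), some ({1,2}, 6), 2, 1),
  (({1,2}, 6), some ({0,1,4}, 19), 3, 1),
  (({0,1,4}, 19), none, 4, 0),
  (({4}, 16), some ({3,4}, 24), 1, 1),
  (({3}, 8), some ({3,4}, 24), 1, 2),
  (({3,4}, 24), none, 3, 0)]

lemma hc5_1 : chk 5 1 c5_1 = true := by decide

def c5_2 : List ((Finset (Fin 5) × ℕ) × Option (Finset (Fin 5) × ℕ) × ℕ × ℕ) :=
  [(({1}, 2), some ({0,1}, 3), 1, 1),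
  (({0,1}, 3), some (∅, 0), 2, 1),
  ((∅, 0), some ({0,1,4}, 19), 3, 1),
  (({0,1,4}, 19), some ({3}, 8), 4, 1),
  (({3}, 8), some ({0,1,2,4}, 23), 5, 1),
  (({0,1,2,4}, 23), none, 6, 0),
  (({4}, 16), some ({2,4}, 20), 1, 1),
  (({2,4}, 20), some ({2,3}, 12), 2, 1),
  (({2,3}, 12), some ({1,3,4}, 26), 3, 1),
  (({1,3,4}, 26), some ({2}, 4), 4, 1),
  (({2}, 4), some ({0,1,3,4}, 27), 5, 1),
  (({0,1,3,4}, 27), none, 6, 0),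
  (({0,2,4}, 21), some ({0,4}, 17), 1, 1),
  (({0,4}, 17), some ({3,4}, 24), 2, 1),
  (({3,4}, 24), some ({1,2,4}, 22), 3, 1),
  (({1,2,4}, 22), some ({0}, 1), 4, 1),
  (({0}, 1), some ({1,2,3,4}, 30), 5, 1),
  (({1,2,3,4}, 30), none, 6, 0),
  (({0,2,3}, 13), some ({0,3}, 9), 1, 1),
  (({0,3}, 9), some ({0,2}, 5), 2, 1),
  (({0,2}, 5), some ({1,2,3}, 14), 3, 1),
  (({1,2,3}, 14), some ({0,3,4}, 25), 4, 1),
  (({0,3,4}, 25), none, 5, 0),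
  (({0,1,3}, 11), some ({1,3}, 10), 1, 1),
  (({1,3}, 10), some ({1,4}, 18), 2, 1),
  (({1,4}, 18), some ({2,3,4}, 28), 3, 1),
  (({2,3,4}, 28), some ({0,1,2}, 7), 4, 1),
  (({0,1,2}, 7), none, 5, 0),
  (({0,1,2,3}, 15), some ({0,1,2,3,4}, 31), 1, 1),
  (({0,2,3,4}, 29), some ({0,1,2,3,4}, 31), 1, 2),
  (({0,1,2,3,4}, 31), some ({1,2}, 6), 3, 1),
  (({1,2}, 6), none, 4, 0)]

lemma hc5_2 : chk 5 2 c5_2 = true := by decide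

def c5_3 : List ((Finset (Fin 5) × ℕ) × Option (Finset (Fin 5) × ℕ) × ℕ × ℕ) :=
  [(({3}, 8), some (∅, 0), 1, 1),
  ((∅, 0), some ({2,4}, 20), 2, 1),
  (({2,4}, 20), some ({0,1,4}, 19), 3, 1),
  (({0,1,4}, 19), some ({2}, 4), 4, 1),
  (({2}, 4), some ({0,1,3,4}, 27), 5, 1),
  (({0,1,3}, 11), some ({0,1,3,4}, 27), 1, 6),
  (({0,1,3,4}, 27), none, 7, 0),
  (({0,4}, 17), some ({0}, 1), 1, 1),
  (({0}, 1), some ({1}, 2), 2, 1),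
  (({1}, 2), some ({2,3}, 12), 3, 1),
  (({2,3}, 12), some ({0,1,2,4}, 23), 4, 1),
  (({0,3,4}, 25), some ({0,2,3,4}, 29), 1, 1),
  (({0,2,3,4}, 29), some ({0,1,2,4}, 23), 2, 5),
  (({0,1,2,4}, 23), none, 7, 0),
  (({0,1,2,3}, 15), some ({1,2,3}, 14), 1, 1),
  (({1,2,3}, 14), some ({0,2,3}, 13), 2, 1),
  (({0,2,3}, 13), some ({1,2,3,4}, 30), 3, 1),
  (({1,2,3,4}, 30), some ({0,1}, 3), 4, 1),
  (({0,1}, 3), some ({2,3,4}, 28), 5, 1),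
  (({2,3,4}, 28), none, 6, 0),
  (({0,2}, 5), some ({0,1,2}, 7), 1, 1),
  (({0,1,2}, 7), some ({0,1,2,3,4}, 31), 2, 1),
  (({0,1,2,3,4}, 31), some ({1,2}, 6), 3, 1),
  (({1,2}, 6), some ({0,3}, 9), 4, 1),
  (({0,3}, 9), some ({1,2,4}, 22), 5, 1),
  (({1,2,4}, 22), none, 6, 0),
  (({4}, 16), some ({3,4}, 24), 1, 1),
  (({3,4}, 24), some ({1,4}, 18), 2, 1),
  (({1,4}, 18), some ({0,2,4}, 21), 3, 1),
  (({0,2,4}, 21), some ({1,3,4}, 26), 4, 1),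
  (({1,3}, 10), some ({1,3,4}, 26), 1, 5),
  (({1,3,4}, 26), none, 6, 0)]

lemma hc5_3 : chk 5 3 c5_3 = true := by decide

def c5_4 : List ((Finset (Fin 5) × ℕ) × Option (Finset (Fin 5) × ℕ) × ℕ × ℕ) :=
  [(({0,1}, 3), some ({1}, 2), 1, 1),
  (({1}, 2), some ({1,3,4}, 26), 2, 1),
  (({1,3,4}, 26), some ({0,2,3,4}, 29), 3, 1),
  (({0,2,3,4}, 29), some (∅, 0), 4, 1),
  ((∅, 0), some ({0,1,2,3,4}, 31), 5, 1),
  (({0}, 1), some ({0,3}, 9), 1, 1),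
  (({0,3}, 9), some ({0,4}, 17), 2, 1),
  (({0,4}, 17), some ({0,1,2,3,4}, 31), 3, 6),
  (({0,1,2,3,4}, 31), none, 9, 0),
  (({2,4}, 20), some ({4}, 16), 1, 1),
  (({4}, 16), some ({2,3,4}, 28), 2, 1),
  (({2,3,4}, 28), some ({0,2}, 5), 3, 1),
  (({0,2}, 5), some ({1,2,3,4}, 30), 4, 1),
  (({0,1,2,3}, 15), some ({0,2,3}, 13), 1, 1),
  (({0,2,3}, 13), some ({0,3,4}, 25), 2, 1),
  (({0,3,4}, 25), some ({1,2,3,4}, 30), 3, 5),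
  (({1,2,3,4}, 30), none, 8, 0),
  (({0,1,3}, 11), some ({1,3}, 10), 1, 1),
  (({1,3}, 10), some ({1,4}, 18), 2, 1),
  (({1,4}, 18), some ({0,1,2}, 7), 3, 1),
  (({0,1,2}, 7), some ({3}, 8), 4, 1),
  (({3}, 8), some ({0,1,2,4}, 23), 5, 1),
  (({0,1,4}, 19), some ({0,1,3,4}, 27), 1, 1),
  (({0,1,3,4}, 27), some ({0,1,2,4}, 23), 2, 6),
  (({0,1,2,4}, 23), none, 8, 0),
  (({2}, 4), some ({2,3}, 12), 1, 1),
  (({2,3}, 12), some ({3,4}, 24), 2, 1),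
  (({3,4}, 24), some ({0,2,4}, 21), 3, 1),
  (({0,2,4}, 21), some ({1,2,3}, 14), 4, 1),
  (({1,2}, 6), some ({1,2,4}, 22), 1, 1),
  (({1,2,4}, 22), some ({1,2,3}, 14), 2, 5),
  (({1,2,3}, 14), none, 7, 0)]

lemma hc5_4 : chk 5 4 c5_4 = true := by decide

def c5_5 : List ((Finset (Fin 5) × ℕ) × Option (Finset (Fin 5) × ℕ) × ℕ × ℕ) :=
  [(({0,2,3}, 13), some ({2,3}, 12), 1, 1),
  (({2,3}, 12), some ({0,3}, 9), 2, 1),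
  (({0,3}, 9), some ({1,3,4}, 26), 3, 1),
  (({1,3,4}, 26), some ({0}, 1), 4, 1),
  (({0}, 1), some ({1,2,3,4}, 30), 5, 1),
  (({1,2}, 6), some ({1,2,3}, 14), 1, 1),
  (({1,2,3}, 14), some ({1}, 2), 2, 1),
  (({1}, 2), some ({1,2,3,4}, 30), 3, 6),
  (({1,2,3,4}, 30), none, 9, 0),
  (({2,4}, 20), some ({4}, 16), 1, 1),
  (({4}, 16), some ({2}, 4), 2, 1),
  (({2}, 4), some ({1,4}, 18), 3, 1),
  (({1,4}, 18), some ({0,2,3,4}, 29), 4, 1),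
  (({0,1,2,4}, 23), some ({1,2,4}, 22), 1, 1),
  (({1,2,4}, 22), some ({0,1,2}, 7), 2, 1),
  (({0,1,2}, 7), some ({1,3}, 10), 3, 1),
  (({1,3}, 10), some ({0,2,3,4}, 29), 4, 5),
  (({0,2,3,4}, 29), none, 9, 0),
  (({0,1,3,4}, 27), some ({0,1,4}, 19), 1, 1),
  (({0,1,4}, 19), some ({0,1,2,3,4}, 31), 2, 1),
  (({0,1,2,3,4}, 31), some ({0,4}, 17), 3, 1),
  (({0,4}, 17), some ({0,1,2,3}, 15), 4, 1),
  (({2,3,4}, 28), some ({3,4}, 24), 1, 1),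
  (({0,3,4}, 25), some ({3,4}, 24), 1, 2),
  (({3}, 8), some ({3,4}, 24), 1, 3),
  (({3,4}, 24), some ({0,1,2,3}, 15), 4, 5),
  (({0,1,2,3}, 15), none, 9, 0),
  (({0,1,3}, 11), some ({0,1}, 3), 1, 1),
  (({0,1}, 3), some (∅, 0), 2, 1),
  (({0,2,4}, 21), some ({0,2}, 5), 1, 1),
  (({0,2}, 5), some (∅, 0), 2, 3),
  ((∅, 0), none, 5, 0)]

lemma hc5_5 : chk 5 5 c5_5 = true := by decide

def c5_6 : List ((Finset (Fin 5) × ℕ) × Option (Finset (Fin 5) × ℕ) × ℕ × ℕ) :=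
  [(({0,1,4}, 19), some ({0,1,2,4}, 23), 1, 1),
  (({0,1,2,4}, 23), some ({0,2}, 5), 2, 1),
  (({0,2}, 5), some ({1,2,4}, 22), 3, 1),
  (({1,2,4}, 22), some ({0,3,4}, 25), 4, 1),
  (({0,3,4}, 25), some ({1,2}, 6), 5, 1),
  (({1,2,3}, 14), some ({0,1,2,3}, 15), 1, 1),
  (({0,1,2,3}, 15), some ({1,2}, 6), 2, 6),
  (({1,2}, 6), none, 8, 0),
  (({1}, 2), some (∅, 0), 1, 1),
  ((∅, 0), some ({0,3}, 9), 2, 1),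
  (({0,3}, 9), some ({4}, 16), 3, 1),
  (({4}, 16), some ({0,1,2}, 7), 4, 1),
  (({0,1,2}, 7), some ({3,4}, 24), 5, 1),
  (({1,3,4}, 26), some ({1,4}, 18), 1, 1),
  (({1,4}, 18), some ({3,4}, 24), 2, 6),
  (({3,4}, 24), none, 8, 0),
  (({0,1,2,3,4}, 31), some ({1,2,3,4}, 30), 1, 1),
  (({1,2,3,4}, 30), some ({0,2,3,4}, 29), 2, 1),
  (({0,2,3,4}, 29), some ({3}, 8), 3, 1),
  (({3}, 8), some ({0,2,4}, 21), 4, 1),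
  (({0,2,4}, 21), some ({1,3}, 10), 5, 1),
  (({0,1,3}, 11), some ({0,1,3,4}, 27), 1, 1),
  (({0,1,3,4}, 27), some ({1,3}, 10), 2, 6),
  (({1,3}, 10), none, 8, 0),
  (({0,4}, 17), some ({0}, 1), 1, 1),
  (({0}, 1), some ({0,2,3}, 13), 2, 1),
  (({0,2,3}, 13), some ({0,1}, 3), 3, 1),
  (({0,1}, 3), some ({2,3}, 12), 4, 1),
  (({2}, 4), some ({2,4}, 20), 1, 1),
  (({2,4}, 20), some ({2,3}, 12), 2, 5),
  (({2,3,4}, 28), some ({2,3}, 12), 1, 7),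
  (({2,3}, 12), none, 8, 0)]

lemma hc5_6 : chk 5 6 c5_6 = true := by decide

def c5_7 : List ((Finset (Fin 5) × ℕ) × Option (Finset (Fin 5) × ℕ) × ℕ × ℕ) :=
  [(({2,4}, 20), some ({2,3,4}, 28), 1, 1),
  (({2,3,4}, 28), some ({2}, 4), 2, 1),
  (({2}, 4), some ({0,1,2,3}, 15), 3, 1),
  (({0,1,2,3}, 15), some (∅, 0), 4, 1),
  ((∅, 0), some ({0,1,2,3,4}, 31), 5, 1),
  (({0,2,3}, 13), some ({2,3}, 12), 1, 1),
  (({2,3}, 12), some ({1,3}, 10), 2, 1),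
  (({1,3}, 10), some ({0}, 1), 3, 1),
  (({0}, 1), some ({0,1,2,3,4}, 31), 4, 6),
  (({1,2,3,4}, 30), some ({1,2,4}, 22), 1, 1),
  (({1,2,4}, 22), some ({0,1,2,3,4}, 31), 2, 10),
  (({0,1,2,3,4}, 31), none, 12, 0),
  (({0,3}, 9), some ({0,1,3}, 11), 1, 1),
  (({0,1,3}, 11), some ({1,3,4}, 26), 2, 1),
  (({1,3,4}, 26), some ({1,2}, 6), 3, 1),
  (({1,2}, 6), some ({0,4}, 17), 4, 1),
  (({0,4}, 17), some ({1,2,3}, 14), 5, 1),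
  (({0,2,4}, 21), some ({0,1,2,4}, 23), 1, 1),
  (({0,1,2,4}, 23), some ({0,2,3,4}, 29), 2, 1),
  (({0,2,3,4}, 29), some ({0,1,4}, 19), 3, 1),
  (({0,1,4}, 19), some ({1,2,3}, 14), 4, 6),
  (({1,2,3}, 14), none, 10, 0),
  (({3}, 8), some ({3,4}, 24), 1, 1),
  (({3,4}, 24), some ({0,1,3,4}, 27), 2, 1),
  (({0,1,3,4}, 27), some ({4}, 16), 3, 1),
  (({4}, 16), some ({0,1,2}, 7), 4, 1),
  (({1}, 2), some ({1,4}, 18), 1, 1),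
  (({1,4}, 18), some ({0,1}, 3), 2, 1),
  (({0,1}, 3), some ({0,3,4}, 25), 3, 1),
  (({0,3,4}, 25), some ({0,1,2}, 7), 4, 5),
  (({0,2}, 5), some ({0,1,2}, 7), 1, 9),
  (({0,1,2}, 7), none, 10, 0)]

lemma hc5_7 : chk 5 7 c5_7 = true := by decide

def c5_8 : List ((Finset (Fin 5) × ℕ) × Option (Finset (Fin 5) × ℕ) × ℕ × ℕ) :=
  [(({0,1,2,3}, 15), some ({0,2,3}, 13), 1, 1),
  (({0,2,3}, 13), some ({2}, 4), 2, 1),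
  (({2}, 4), some ({0,2,3,4}, 29), 3, 1),
  (({0,2,3,4}, 29), some ({0,1}, 3), 4, 1),
  (({0,1}, 3), some ({2,3,4}, 28), 5, 1),
  (({4}, 16), some ({2,4}, 20), 1, 1),
  (({2,4}, 20), some (∅, 0), 2, 1),
  ((∅, 0), some ({0,1,4}, 19), 3, 1),
  (({0,1,4}, 19), some ({2,3,4}, 28), 4, 6),
  (({3,4}, 24), some ({2,3,4}, 28), 1, 10),
  (({2,3,4}, 28), none, 11, 0),
  (({0,2}, 5), some ({0}, 1), 1, 1),
  (({0}, 1), some ({0,1,2}, 7), 2, 1),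
  (({0,1,2}, 7), some ({1,2,3,4}, 30), 3, 1),
  (({1,2,3,4}, 30), some ({0,4}, 17), 4, 1),
  (({0,4}, 17), some ({1,2,3}, 14), 5, 1),
  (({1}, 2), some ({1,4}, 18), 1, 1),
  (({1,4}, 18), some ({0,1,3,4}, 27), 2, 1),
  (({0,1,3,4}, 27), some ({0,2,4}, 21), 3, 1),
  (({0,2,4}, 21), some ({1,2,3}, 14), 4, 6),
  (({1,2}, 6), some ({1,2,3}, 14), 1, 10),
  (({1,2,3}, 14), none, 11, 0),
  (({1,3}, 10), some ({0,1,3}, 11), 1, 1),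
  (({0,1,3}, 11), some ({1,3,4}, 26), 2, 1),
  (({1,3,4}, 26), some ({0,3}, 9), 3, 1),
  (({0,1,2,4}, 23), some ({1,2,4}, 22), 1, 1),
  (({1,2,4}, 22), some ({0,1,2,3,4}, 31), 2, 1),
  (({0,1,2,3,4}, 31), some ({0,3}, 9), 3, 4),
  (({3}, 8), some ({2,3}, 12), 1, 1),
  (({2,3}, 12), some ({0,3}, 9), 2, 7),
  (({0,3,4}, 25), some ({0,3}, 9), 1, 9),
  (({0,3}, 9), none, 10, 0)]

lemma hc5_8 : chk 5 8 c5_8 = true := by decide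

def c5_9 : List ((Finset (Fin 5) × ℕ) × Option (Finset (Fin 5) × ℕ) × ℕ × ℕ) :=
  [(({2,3,4}, 28), some ({0,2,3,4}, 29), 1, 1),
  (({0,2,3,4}, 29), some ({0,1,2,3}, 15), 2, 1),
  (({0,1,2,3}, 15), some ({0,1,4}, 19), 3, 1),
  (({0,1,4}, 19), some ({2}, 4), 4, 1),
  (({2}, 4), some ({0,1,3,4}, 27), 5, 1),
  (({2,3}, 12), some ({1,2,3}, 14), 1, 1),
  (({1,2,3}, 14), some ({0,2,3}, 13), 2, 1),
  (({0,2,3}, 13), some ({2,4}, 20), 3, 1),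
  (({2,4}, 20), some ({0,1,3,4}, 27), 4, 6),
  (({1,3}, 10), some ({0,1,3}, 11), 1, 1),
  (({0,1,3}, 11), some ({1}, 2), 2, 1),
  (({1}, 2), some ({0,1,3,4}, 27), 3, 10),
  (({0,1,3,4}, 27), none, 13, 0),
  (({3,4}, 24), some ({1,3,4}, 26), 1, 1),
  (({1,3,4}, 26), some ({0,3,4}, 25), 2, 1),
  (({0,3,4}, 25), some ({0,1}, 3), 3, 1),
  (({0,1}, 3), some ({1,2,3,4}, 30), 4, 1),
  (({1,2,3,4}, 30), some ({0}, 1), 5, 1),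
  (({0,2,4}, 21), some ({0,4}, 17), 1, 1),
  (({0,4}, 17), some ({0,2}, 5), 2, 1),
  (({0,2}, 5), some ({1,2,4}, 22), 3, 1),
  (({1,2,4}, 22), some ({0}, 1), 4, 6),
  (({0}, 1), none, 10, 0),
  (({3}, 8), some ({0,3}, 9), 1, 1),
  (({0,3}, 9), some (∅, 0), 2, 1),
  (({0,1,2}, 7), some ({1,2}, 6), 1, 1),
  (({1,2}, 6), some ({0,1,2,4}, 23), 2, 1),
  (({0,1,2,3,4}, 31), some ({0,1,2,4}, 23), 1, 3),
  (({0,1,2,4}, 23), some (∅, 0), 4, 3),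
  (({4}, 16), some ({1,4}, 18), 1, 1),
  (({1,4}, 18), some (∅, 0), 2, 7),
  ((∅, 0), none, 9, 0)]

lemma hc5_9 : chk 5 9 c5_9 = true := by decide

def c5_10 : List ((Finset (Fin 5) × ℕ) × Option (Finset (Fin 5) × ℕ) × ℕ × ℕ) :=
  [(({0,4}, 17), some ({0,1,4}, 19), 1, 1),
  (({0,1,4}, 19), some ({0,3,4}, 25), 2, 1),
  (({0,3,4}, 25), some ({2,4}, 20), 3, 1),
  (({2,4}, 20), some ({0,1,3,4}, 27), 4, 1),
  (({0,1,3,4}, 27), some ({2}, 4), 5, 1),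
  (({1,2,3}, 14), some ({2,3}, 12), 1, 1),
  (({2,3}, 12), some ({0,3}, 9), 2, 1),
  (({0,3}, 9), some ({1,3,4}, 26), 3, 1),
  (({1,3,4}, 26), some ({2}, 4), 4, 6),
  (({0,2}, 5), some ({2}, 4), 1, 10),
  (({2}, 4), none, 11, 0),
  (({0,1}, 3), some ({0,1,2}, 7), 1, 1),
  (({0,1,2}, 7), some ({1,2,4}, 22), 2, 1),
  (({1,2,4}, 22), some ({1,3}, 10), 3, 1),
  (({1,3}, 10), some ({0,1,2,4}, 23), 4, 1),
  (({0,1,2,4}, 23), some ({3}, 8), 5, 1),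
  (({1}, 2), some ({1,4}, 18), 1, 1),
  (({1,4}, 18), some ({1,2}, 6), 2, 1),
  (({1,2}, 6), some ({0,2,4}, 21), 3, 1),
  (({0,2,4}, 21), some ({3}, 8), 4, 6),
  (({3,4}, 24), some ({3}, 8), 1, 10),
  (({3}, 8), none, 11, 0),
  (({0,1,3}, 11), some ({0,1,2,3}, 15), 1, 1),
  (({0,1,2,3}, 15), some ({1,2,3,4}, 30), 2, 1),
  (({1,2,3,4}, 30), some ({4}, 16), 3, 1),
  (({4}, 16), some ({0,1,2,3,4}, 31), 4, 1),
  (({0,1,2,3,4}, 31), some (∅, 0), 5, 1),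
  (({0,2,3,4}, 29), some ({2,3,4}, 28), 1, 1),
  (({2,3,4}, 28), some ({0,2,3}, 13), 2, 1),
  (({0,2,3}, 13), some (∅, 0), 3, 6),
  (({0}, 1), some (∅, 0), 1, 9),
  ((∅, 0), none, 10, 0)]

lemma hc5_10 : chk 5 10 c5_10 = true := by decide

def c5_12 : List ((Finset (Fin 5) × ℕ) × Option (Finset (Fin 5) × ℕ) × ℕ × ℕ) :=
  [(({0,1}, 3), some ({0,1,2}, 7), 1, 1),
  (({0,1,2}, 7), some ({1,2,3}, 14), 2, 1),
  (({1,2,3}, 14), some ({0,1,3,4}, 27), 3, 1),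
  (({0,1,3,4}, 27), some (∅, 0), 4, 1),
  ((∅, 0), some ({0,1,2,3,4}, 31), 5, 1),
  (({2}, 4), some ({0,2}, 5), 1, 1),
  (({0,2}, 5), some ({0,1,2,4}, 23), 2, 1),
  (({0,1,2,4}, 23), some ({0}, 1), 3, 1),
  (({0}, 1), some ({0,1,2,3,4}, 31), 4, 6),
  (({1,2,4}, 22), some ({2,4}, 20), 1, 1),
  (({2,4}, 20), some ({0,4}, 17), 2, 1),
  (({0,4}, 17), some ({1}, 2), 3, 1),
  (({1}, 2), some ({0,1,2,3,4}, 31), 4, 10),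
  (({1,3,4}, 26), some ({1,2,3,4}, 30), 1, 1),
  (({1,2,3,4}, 30), some ({1,4}, 18), 2, 1),
  (({1,4}, 18), some ({0,1,2,3,4}, 31), 3, 14),
  (({0,1,2,3,4}, 31), none, 17, 0),
  (({2,3,4}, 28), some ({2,3}, 12), 1, 1),
  (({2,3}, 12), some ({1,2}, 6), 2, 1),
  (({1,2}, 6), some ({0,1,4}, 19), 3, 1),
  (({0,1,4}, 19), some ({0,2,3}, 13), 4, 1),
  (({0,2,4}, 21), some ({0,2,3,4}, 29), 1, 1),
  (({0,2,3,4}, 29), some ({0,3}, 9), 2, 1),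
  (({0,3}, 9), some ({4}, 16), 3, 1),
  (({4}, 16), some ({0,2,3}, 13), 4, 5),
  (({0,1,3}, 11), some ({0,1,2,3}, 15), 1, 1),
  (({0,1,2,3}, 15), some ({1,3}, 10), 2, 1),
  (({1,3}, 10), some ({0,2,3}, 13), 3, 9),
  (({0,3,4}, 25), some ({3,4}, 24), 1, 1),
  (({3}, 8), some ({3,4}, 24), 1, 2),
  (({3,4}, 24), some ({0,2,3}, 13), 3, 12),
  (({0,2,3}, 13), none, 15, 0)]

lemma hc5_12 : chk 5 12 c5_12 = true := by decide

def c5_13 : List ((Finset (Fin 5) × ℕ) × Option (Finset (Fin 5) × ℕ) × ℕ × ℕ) :=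
  [(({0,3}, 9), some ({0,3,4}, 25), 1, 1),
  (({0,3,4}, 25), some ({2,3,4}, 28), 2, 1),
  (({2,3,4}, 28), some ({0,1,2,3}, 15), 3, 1),
  (({0,1,2,3}, 15), some (∅, 0), 4, 1),
  ((∅, 0), some ({0,1,2,3,4}, 31), 5, 1),
  (({2}, 4), some ({2,4}, 20), 1, 1),
  (({2,4}, 20), some ({2,3}, 12), 2, 1),
  (({2,3}, 12), some ({0}, 1), 3, 1),
  (({0}, 1), some ({0,1,2,3,4}, 31), 4, 6),
  (({0,2,4}, 21), some ({0,4}, 17), 1, 1),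
  (({0,4}, 17), some ({0,2}, 5), 2, 1),
  (({0,2}, 5), some ({3}, 8), 3, 1),
  (({3}, 8), some ({0,1,2,3,4}, 31), 4, 10),
  (({0,1,4}, 19), some ({0,1,3,4}, 27), 1, 1),
  (({0,1,3,4}, 27), some ({0,2,3,4}, 29), 2, 1),
  (({0,2,3,4}, 29), some ({4}, 16), 3, 1),
  (({4}, 16), some ({0,1,2,3,4}, 31), 4, 14),
  (({0,1,2,3,4}, 31), none, 18, 0),
  (({1,3,4}, 26), some ({1,4}, 18), 1, 1),
  (({1,4}, 18), some ({3,4}, 24), 2, 1),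
  (({3,4}, 24), some ({1}, 2), 3, 1),
  (({0,1,2}, 7), some ({0,1,2,4}, 23), 1, 1),
  (({0,1,2,4}, 23), some ({0,1}, 3), 2, 1),
  (({0,1}, 3), some ({0,2,3}, 13), 3, 1),
  (({0,2,3}, 13), some ({1}, 2), 4, 4),
  (({1,2,3,4}, 30), some ({1,2,4}, 22), 1, 1),
  (({1,2,4}, 22), some ({1}, 2), 2, 8),
  (({1,3}, 10), some ({0,1,3}, 11), 1, 1),
  (({0,1,3}, 11), some ({1}, 2), 2, 10),
  (({1,2}, 6), some ({1,2,3}, 14), 1, 1),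
  (({1,2,3}, 14), some ({1}, 2), 2, 12),
  (({1}, 2), none, 14, 0)]

lemma hc5_13 : chk 5 13 c5_13 = true := by decide

def c5_14 : List ((Finset (Fin 5) × ℕ) × Option (Finset (Fin 5) × ℕ) × ℕ × ℕ) :=
  [(({2}, 4), some ({0,2}, 5), 1, 1),
  (({0,2}, 5), some ({0,4}, 17), 2, 1),
  (({0,4}, 17), some ({3}, 8), 3, 1),
  (({3}, 8), some ({0,1,2}, 7), 4, 1),
  (({0,1,2}, 7), some ({3,4}, 24), 5, 1),
  (({1,3}, 10), some ({1,2,3}, 14), 1, 1),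
  (({1,2,3}, 14), some ({0,1,2,3,4}, 31), 2, 1),
  (({0,1,2,3,4}, 31), some ({1,2}, 6), 3, 1),
  (({1,2}, 6), some ({3,4}, 24), 4, 6),
  (({2,4}, 20), some ({1,2,4}, 22), 1, 1),
  (({1,2,4}, 22), some ({2,3,4}, 28), 2, 1),
  (({2,3,4}, 28), some ({0,1,2,3}, 15), 3, 1),
  (({0,1,2,3}, 15), some ({3,4}, 24), 4, 10),
  (({0,3,4}, 25), some ({0,2,3,4}, 29), 1, 1),
  (({0,2,3,4}, 29), some ({3,4}, 24), 2, 14),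
  (({3,4}, 24), none, 16, 0),
  (({1,2,3,4}, 30), some ({1,3,4}, 26), 1, 1),
  (({1,3,4}, 26), some ({0,1,3}, 11), 2, 1),
  (({0,1,3}, 11), some ({2,3}, 12), 3, 1),
  (({2,3}, 12), some ({0,1}, 3), 4, 1),
  (({0,1,2,4}, 23), some ({0,2,4}, 21), 1, 1),
  (({0,2,4}, 21), some ({0,2,3}, 13), 2, 1),
  (({0,2,3}, 13), some ({0,1}, 3), 3, 5),
  (({0}, 1), some ({0,3}, 9), 1, 1),
  (({0,3}, 9), some ({0,1}, 3), 2, 8),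
  (({1}, 2), some (∅, 0), 1, 1),
  ((∅, 0), some ({0,1}, 3), 2, 10),
  (({4}, 16), some ({1,4}, 18), 1, 1),
  (({1,4}, 18), some ({0,1}, 3), 2, 12),
  (({0,1,4}, 19), some ({0,1,3,4}, 27), 1, 1),
  (({0,1,3,4}, 27), some ({0,1}, 3), 2, 14),
  (({0,1}, 3), none, 16, 0)]

lemma hc5_14 : chk 5 14 c5_14 = true := by decide

def c5_15 : List ((Finset (Fin 5) × ℕ) × Option (Finset (Fin 5) × ℕ) × ℕ × ℕ) :=
  [(({0,1}, 3), some ({1}, 2), 1, 1),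
  (({1}, 2), some ({0,1,4}, 19), 2, 1),
  (({0,1,4}, 19), some ({0,2}, 5), 3, 1),
  (({0,2}, 5), some ({0,1,3,4}, 27), 4, 1),
  (({0,1,3,4}, 27), some ({2}, 4), 5, 1),
  (({4}, 16), some ({1,4}, 18), 1, 1),
  (({1,4}, 18), some ({1,2}, 6), 2, 1),
  (({1,2}, 6), some ({0,1,2,3,4}, 31), 3, 1),
  (({0,1,2,3,4}, 31), some ({2}, 4), 4, 6),
  (({1,2,3}, 14), some ({1,3}, 10), 1, 1),
  (({1,3}, 10), some ({3,4}, 24), 2, 1),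
  (({3,4}, 24), some ({0,1,3}, 11), 3, 1),
  (({0,1,3}, 11), some ({2}, 4), 4, 10),
  (({0,1,2,3}, 15), some ({0,1,2}, 7), 1, 1),
  (({0,1,2}, 7), some ({2}, 4), 2, 14),
  (({2}, 4), none, 16, 0),
  (({0,2,3,4}, 29), some ({0,3,4}, 25), 1, 1),
  (({0,3,4}, 25), some ({2,3,4}, 28), 2, 1),
  (({2,3,4}, 28), some ({0,3}, 9), 3, 1),
  (({0,3}, 9), some ({0,1,2,4}, 23), 4, 1),
  (({0,1,2,4}, 23), some ({3}, 8), 5, 1),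
  (({0,2,3}, 13), some ({2,3}, 12), 1, 1),
  (({2,3}, 12), some ({2,4}, 20), 2, 1),
  (({2,4}, 20), some ({3}, 8), 3, 6),
  (({1,2,4}, 22), some ({1,2,3,4}, 30), 1, 1),
  (({1,3,4}, 26), some ({1,2,3,4}, 30), 1, 2),
  (({1,2,3,4}, 30), some ({0,2,4}, 21), 3, 1),
  (({0,2,4}, 21), some ({3}, 8), 4, 9),
  (({0}, 1), some (∅, 0), 1, 1),
  ((∅, 0), some ({0,4}, 17), 2, 1),
  (({0,4}, 17), some ({3}, 8), 3, 13),
  (({3}, 8), none, 16, 0)]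

lemma hc5_15 : chk 5 15 c5_15 = true := by decide

def c6_10 : List ((Finset (Fin 6) × ℕ) × Option (Finset (Fin 6) × ℕ) × ℕ × ℕ) :=
  [(({5}, 32), some ({3,5}, 40), 1, 1),
  (({3,5}, 40), some ({0,5}, 33), 2, 1),
  (({0,5}, 33), some ({2,4,5}, 52), 3, 1),
  (({2,4,5}, 52), some ({0,1,3,4,5}, 59), 4, 1),
  (({0,1,3,4,5}, 59), some ({2,4}, 20), 5, 1),
  (({2,4}, 20), some ({0,1,3,5}, 43), 6, 1),
  (({0}, 1), some ({0,3}, 9), 1, 1),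
  (({0,3}, 9), some ({2,3}, 12), 2, 1),
  (({2,3}, 12), some ({0,2,3,4,5}, 61), 3, 1),
  (({0,2,3,4,5}, 61), some ({1,2,4}, 22), 4, 1),
  (({1,2,4}, 22), some ({0,1,3,5}, 43), 5, 7),
  (({0,1,2,3,4}, 31), some ({0,1,2,3,4,5}, 63), 1, 1),
  (({0,1,2,3,4,5}, 63), some ({0,1,3,5}, 43), 2, 12),
  (({0,1,3,5}, 43), none, 14, 0),
  (({3,4}, 24), some ({2,3,4}, 28), 1, 1),
  (({2,3,4}, 28), some ({3}, 8), 2, 1),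
  (({3}, 8), some ({0,1}, 3), 3, 1),
  (({0,1}, 3), some ({1,2,4,5}, 54), 4, 1),
  (({1,2,4,5}, 54), some ({0,2,3}, 13), 5, 1),
  (({0,2,3}, 13), some ({1,4,5}, 50), 6, 1),
  (({1,2,3,5}, 46), some ({1,3,5}, 42), 1, 1),
  (({1,3,5}, 42), some ({0,1,3}, 11), 2, 1),
  (({0,1,3}, 11), some ({1,4}, 18), 3, 1),
  (({1,4}, 18), some ({0,2,3,4}, 29), 4, 1),
  (({0,2,3,4}, 29), some ({1,4,5}, 50), 5, 7),
  (({0,1,4,5}, 51), some ({1,4,5}, 50), 1, 12),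
  (({1,4,5}, 50), none, 13, 0),
  (({0,2,4,5}, 53), some ({0,1,2,4,5}, 55), 1, 1),
  (({0,1,2,4,5}, 55), some ({0,1,2,3,5}, 47), 2, 1),
  (({0,1,2,3,5}, 47), some ({0,1,2,4}, 23), 3, 1),
  (({0,1,2,4}, 23), some ({2,5}, 36), 4, 1),
  (({2,5}, 36), some ({0,3,4}, 25), 5, 1),
  (({0,3,4}, 25), some ({1,2,5}, 38), 6, 1),
  (({0,1,3,4}, 27), some ({0,1,4}, 19), 1, 1),
  (({0,1,4}, 19), some ({0,4,5}, 49), 2, 1),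
  (({0,4,5}, 49), some ({2,3,4,5}, 60), 3, 1),
  (({2,3,4,5}, 60), some ({0,4}, 17), 4, 1),
  (({0,4}, 17), some ({1,2,5}, 38), 5, 7),
  (({0,1,2,5}, 39), some ({1,2,5}, 38), 1, 12),
  (({1,2,5}, 38), none, 13, 0),
  (({0,2,5}, 37), some ({0,2}, 5), 1, 1),
  (({0,2}, 5), some (∅, 0), 2, 1),
  ((∅, 0), some ({0,3,5}, 41), 3, 1),
  (({0,3,5}, 41), some ({0,2,4}, 21), 4, 1),
  (({0,2,4}, 21), some ({1,5}, 34), 5, 1),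
  (({1,2}, 6), some ({1}, 2), 1, 1),
  (({1}, 2), some ({4}, 16), 2, 1),
  (({4}, 16), some ({0,3,4,5}, 57), 3, 1),
  (({0,3,4,5}, 57), some ({1,5}, 34), 4, 6),
  (({3,4,5}, 56), some ({4,5}, 48), 1, 1),
  (({4,5}, 48), some ({1,5}, 34), 2, 10),
  (({1,5}, 34), none, 12, 0),
  (({0,1,2,3}, 15), some ({0,1,2}, 7), 1, 1),
  (({0,1,2}, 7), some ({0,1,5}, 35), 2, 1),
  (({0,1,5}, 35), some ({0,2,3,5}, 45), 3, 1),
  (({0,2,3,5}, 45), some ({1,3}, 10), 4, 1),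
  (({1,2,3,4}, 30), some ({1,2,3}, 14), 1, 1),
  (({1,2,3}, 14), some ({2}, 4), 2, 1),
  (({2}, 4), some ({1,3}, 10), 3, 5),
  (({1,3,4,5}, 58), some ({1,2,3,4,5}, 62), 1, 1),
  (({1,2,3,4,5}, 62), some ({2,3,5}, 44), 2, 1),
  (({2,3,5}, 44), some ({1,3}, 10), 3, 8),
  (({1,3,4}, 26), some ({1,3}, 10), 1, 11),
  (({1,3}, 10), none, 12, 0)]

lemma hc6_10 : chk 6 10 c6_10 = true := by decide

def c6_11 : List ((Finset (Fin 6) × ℕ) × Option (Finset (Fin 6) × ℕ) × ℕ × ℕ) :=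
  [(({0,5}, 33), some ({0,1,5}, 35), 1, 1),
  (({0,1,5}, 35), some ({5}, 32), 2, 1),
  (({5}, 32), some ({1,2}, 6), 3, 1),
  (({1,2}, 6), some ({1,3,4,5}, 58), 4, 1),
  (({1,3,4,5}, 58), some ({2}, 4), 5, 1),
  (({2}, 4), some ({0,1,3,4,5}, 59), 6, 1),
  (({1,5}, 34), some ({1,2,5}, 38), 1, 1),
  (({1,2,5}, 38), some ({1,3,5}, 42), 2, 1),
  (({1,3,5}, 42), some ({1,2,3,4}, 30), 3, 1),
  (({1,2,3,4}, 30), some ({0,2}, 5), 4, 1),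
  (({0,2}, 5), some ({0,1,3,4,5}, 59), 5, 7),
  (({0}, 1), some ({0,4}, 17), 1, 1),
  (({0,4}, 17), some ({0,1,3,4}, 27), 2, 1),
  (({0,1,3,4}, 27), some ({2,3,4}, 28), 3, 1),
  (({2,3,4}, 28), some ({0,1,3,4,5}, 59), 4, 12),
  (({0,1,3,4,5}, 59), none, 16, 0),
  (({2,3,4,5}, 60), some ({2,3,5}, 44), 1, 1),
  (({2,3,5}, 44), some ({3,4,5}, 56), 2, 1),
  (({3,4,5}, 56), some ({1,2,3,5}, 46), 3, 1),
  (({1,2,3,5}, 46), some ({4,5}, 48), 4, 1),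
  (({4,5}, 48), some ({0,1,2,3,4}, 31), 5, 1),
  (({0,1}, 3), some ({0,1,3}, 11), 1, 1),
  (({0,1,3}, 11), some ({1,3,4}, 26), 2, 1),
  (({1,3,4}, 26), some ({0,1,2,3}, 15), 3, 1),
  (({0,1,2,3}, 15), some ({3,5}, 40), 4, 1),
  (({3,5}, 40), some ({0,1,2,3,4}, 31), 5, 6),
  (({0,1,4,5}, 51), some ({1,4,5}, 50), 1, 1),
  (({1,4,5}, 50), some ({1,2,4}, 22), 2, 1),
  (({1,2,4}, 22), some ({0,2,4,5}, 53), 3, 1),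
  (({0,2,4,5}, 53), some (∅, 0), 4, 1),
  ((∅, 0), some ({0,1,2,3,4}, 31), 5, 11),
  (({0,1,2,3,4}, 31), none, 16, 0),
  (({0,3}, 9), some ({0,3,4}, 25), 1, 1),
  (({0,3,4}, 25), some ({0,4,5}, 49), 2, 1),
  (({0,4,5}, 49), some ({3,4}, 24), 3, 1),
  (({3,4}, 24), some ({0,2,3,5}, 45), 4, 1),
  (({0,2,3,5}, 45), some ({4}, 16), 5, 1),
  (({4}, 16), some ({0,1,2,3,5}, 47), 6, 1),
  (({0,1,3,5}, 43), some ({0,3,5}, 41), 1, 1),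
  (({0,3,5}, 41), some ({3}, 8), 2, 1),
  (({3}, 8), some ({0,3,4,5}, 57), 3, 1),
  (({0,3,4,5}, 57), some ({2,4}, 20), 4, 1),
  (({2,4}, 20), some ({0,1,2,3,5}, 47), 5, 7),
  (({0,1,2,4,5}, 55), some ({0,1,2,5}, 39), 1, 1),
  (({0,1,2,5}, 39), some ({2,5}, 36), 2, 1),
  (({2,5}, 36), some ({0,2,4}, 21), 3, 1),
  (({0,2,4}, 21), some ({0,1,2,3,5}, 47), 4, 12),
  (({0,1,2,3,5}, 47), none, 16, 0),
  (({2,4,5}, 52), some ({1,2,4,5}, 54), 1, 1),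
  (({1,2,4,5}, 54), some ({0,1,2,3,4,5}, 63), 2, 1),
  (({0,1,2,3,4,5}, 63), some ({0,1,4}, 19), 3, 1),
  (({0,1,4}, 19), some ({1,2,3,4,5}, 62), 4, 1),
  (({1}, 2), some ({1,4}, 18), 1, 1),
  (({1,4}, 18), some ({0,1,2,4}, 23), 2, 1),
  (({0,1,2,4}, 23), some ({0,2,5}, 37), 3, 1),
  (({0,2,5}, 37), some ({1,2,3,4,5}, 62), 4, 5),
  (({1,2,3}, 14), some ({2,3}, 12), 1, 1),
  (({2,3}, 12), some ({1,3}, 10), 2, 1),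
  (({1,3}, 10), some ({1,2,3,4,5}, 62), 3, 9),
  (({0,2,3,4,5}, 61), some ({0,2,3,4}, 29), 1, 1),
  (({0,2,3}, 13), some ({0,2,3,4}, 29), 1, 2),
  (({0,2,3,4}, 29), some ({0,1,2}, 7), 3, 1),
  (({0,1,2}, 7), some ({1,2,3,4,5}, 62), 4, 12),
  (({1,2,3,4,5}, 62), none, 16, 0)]

lemma hc6_11 : chk 6 11 c6_11 = true := by decide


/-! ### recursion table -/

def certList : List (ℕ × ℕ) := [(1, 0), (1, 1), (1, 2), (1, 3), (1, 4), (1, 5), (2, 5), (3, 5), (4, 5), (5, 5), (6, 5), (7, 5), (8, 5), (9, 5), (10, 5), (12, 5), (13, 5), (14, 5), (15, 5), (10, 6), (11, 6)]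

def certOK (j m : ℕ) : Bool := decide ((j, m) ∈ certList)

def OKp : ℕ → ℕ → Bool
  | j, 0 => certOK j 0
  | j, m+1 => certOK j (m+1) || (decide (5 ≤ m) && OKp j m && OKp (j+1) m)

lemma okp_one : ∀ m < 20, OKp 1 m = true := by decide

lemma lemA {d : ℕ} : ∀ (m : ℕ) (S T r : Finset (Fin d)), S.card = m → Disjoint T S →
    1 ≤ T.card → OKp T.card m = true → Sweep (cubeGraph d) (region r T S) r := by
  intro m
  induction m using Nat.strong_induction_on with
  | _ m IH =>
  intro S T r hcard hdisj hT hok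
  by_cases hc : certOK T.card m = true
  · have hmem : (T.card, m) ∈ certList := by
      rw [certOK] at hc
      exact of_decide_eq_true hc
    simp only [certList, List.mem_cons, Prod.mk.injEq, List.not_mem_nil, or_false] at hmem
    rcases hmem with ⟨h1, h2⟩|⟨h1, h2⟩|⟨h1, h2⟩|⟨h1, h2⟩|⟨h1, h2⟩|⟨h1, h2⟩|⟨h1, h2⟩|⟨h1, h2⟩|⟨h1, h2⟩|⟨h1, h2⟩|⟨h1, h2⟩|⟨h1, h2⟩|⟨h1, h2⟩|⟨h1, h2⟩|⟨h1, h2⟩|⟨h1, h2⟩|⟨h1, h2⟩|⟨h1, h2⟩|⟨h1, h2⟩|⟨h1, h2⟩|⟨h1, h2⟩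
    · subst h2
      exact certSweep 0 1 c0_1 hc0_1 enc_inj0 hdisj h1 hcard (by omega)
    · subst h2
      exact certSweep 1 1 c1_1 hc1_1 enc_inj1 hdisj h1 hcard (by omega)
    · subst h2
      exact certSweep 2 1 c2_1 hc2_1 enc_inj2 hdisj h1 hcard (by omega)
    · subst h2
      exact certSweep 3 1 c3_1 hc3_1 enc_inj3 hdisj h1 hcard (by omega)
    · subst h2
      exact certSweep 4 1 c4_1 hc4_1 enc_inj4 hdisj h1 hcard (by omega)
    · subst h2
      exact certSweep 5 1 c5_1 hc5_1 enc_inj5 hdisj h1 hcard (by omega)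
    · subst h2
      exact certSweep 5 2 c5_2 hc5_2 enc_inj5 hdisj h1 hcard (by omega)
    · subst h2
      exact certSweep 5 3 c5_3 hc5_3 enc_inj5 hdisj h1 hcard (by omega)
    · subst h2
      exact certSweep 5 4 c5_4 hc5_4 enc_inj5 hdisj h1 hcard (by omega)
    · subst h2
      exact certSweep 5 5 c5_5 hc5_5 enc_inj5 hdisj h1 hcard (by omega)
    · subst h2
      exact certSweep 5 6 c5_6 hc5_6 enc_inj5 hdisj h1 hcard (by omega)
    · subst h2
      exact certSweep 5 7 c5_7 hc5_7 enc_inj5 hdisj h1 hcard (by omega)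
    · subst h2
      exact certSweep 5 8 c5_8 hc5_8 enc_inj5 hdisj h1 hcard (by omega)
    · subst h2
      exact certSweep 5 9 c5_9 hc5_9 enc_inj5 hdisj h1 hcard (by omega)
    · subst h2
      exact certSweep 5 10 c5_10 hc5_10 enc_inj5 hdisj h1 hcard (by omega)
    · subst h2
      exact certSweep 5 12 c5_12 hc5_12 enc_inj5 hdisj h1 hcard (by omega)
    · subst h2
      exact certSweep 5 13 c5_13 hc5_13 enc_inj5 hdisj h1 hcard (by omega)
    · subst h2
      exact certSweep 5 14 c5_14 hc5_14 enc_inj5 hdisj h1 hcard (by omega)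
    · subst h2
      exact certSweep 5 15 c5_15 hc5_15 enc_inj5 hdisj h1 hcard (by omega)
    · subst h2
      exact certSweep 6 10 c6_10 hc6_10 enc_inj6 hdisj h1 hcard (by omega)
    · subst h2
      exact certSweep 6 11 c6_11 hc6_11 enc_inj6 hdisj h1 hcard (by omega)
  · cases m with
    | zero =>
      rw [OKp] at hok
      exact absurd hok hc
    | succ m' =>
      rw [OKp, Bool.or_eq_true] at hok
      rcases hok with h | h
      · exact absurd h hc
      · simp only [Bool.and_eq_true, decide_eq_true_eq] at h
        obtain ⟨⟨h5, hok1⟩, hok2⟩ := h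
        have hSne : S.Nonempty := by
          rw [← Finset.card_pos, hcard]
          omega
        obtain ⟨a, ha⟩ := hSne
        have hcard' : (S.erase a).card = m' := by
          rw [Finset.card_erase_of_mem ha, hcard]
          omega
        have hd1 : Disjoint T (S.erase a) :=
          Finset.disjoint_of_subset_right (Finset.erase_subset a S) hdisj
        have hd2 : Disjoint (insert a T) (S.erase a) := by
          rw [Finset.disjoint_left]
          intro x hx hx2
          rcases Finset.mem_insert.mp hx with rfl | hxT
          · exact (Finset.mem_erase.mp hx2).1 rfl
          · exact Finset.disjoint_left.mp hd1 hxT hx2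
        have hTa : a ∉ T := fun h => Finset.disjoint_left.mp hdisj h ha
        have hcardT : (insert a T).card = T.card + 1 := Finset.card_insert_of_notMem hTa
        have sw1 := IH m' (by omega) (S.erase a) T r hcard' hd1 hT hok1
        have sw2 := IH m' (by omega) (S.erase a) (insert a T) r hcard' hd2
          (by omega) (by rw [hcardT]; exact hok2)
        rw [region_split r ha hdisj]
        exact sweep_union (region_split_disjoint r ha hdisj) sw1 sw2

lemma lemB {d : ℕ} (hd : d ≤ 20) (S : Finset (Fin d)) (r : Finset (Fin d)) :
    Sweep (cubeGraph d) (region' r S) r := by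
  induction S using Finset.induction_on with
  | empty =>
    have h : region' r ∅ = ∅ := by simp [region']
    rw [h]
    exact sweep_empty _ _
  | @insert a S ha ih =>
    rw [region'_split r ha]
    refine sweep_union (region'_split_disjoint r ha) ih ?_
    have hcS : S.card < 20 := by
      have h1 : (insert a S).card ≤ d := by
        calc (insert a S).card ≤ Finset.univ.card := Finset.card_le_univ _
        _ = d := by simp
      rw [Finset.card_insert_of_notMem ha] at h1
      omega
    refine lemA S.card S {a} r rfl (Finset.disjoint_singleton_left.mpr ha) (by simp) ?_
    have h2 := okp_one S.card hcS
    simpa using h2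

lemma main_stackable {d : ℕ} (hd2 : d ≤ 20) : IsStackable (cubeGraph d) := by
  intro r
  obtain ⟨hrnot, hmain⟩ := lemB hd2 Finset.univ r
  have hregion : region' r Finset.univ = Finset.univ.erase r := by
    rw [region', Finset.powerset_univ]
    have hinj : Function.Injective (fun A : Finset (Fin d) => A ∆ r) :=
      fun A B h => sd_cancel_inj h
    rw [Finset.image_erase hinj]
    have h1 : Finset.univ.image (fun A : Finset (Fin d) => A ∆ r) = Finset.univ := by
      refine Finset.eq_univ_of_forall (fun B => ?_)
      exact Finset.mem_image.mpr ⟨B ∆ r, Finset.mem_univ _, sdc B r⟩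
    have h2 : (∅ : Finset (Fin d)) ∆ r = r := by simp
    rw [h1, h2]
  have hres := hmain (fun _ => 1) (fun v _ => rfl) le_rfl
  have hfin : (fun v => if v ∈ region' r Finset.univ then 0
      else if v = r then (fun _ : Finset (Fin d) => (1:ℕ)) r + (region' r Finset.univ).card
      else (fun _ : Finset (Fin d) => (1:ℕ)) v)
      = (fun w : Finset (Fin d) =>
        if w = r then ∑ _v : Finset (Fin d), (1:ℕ) else 0) := by
    funext w
    rw [hregion]
    by_cases hwr : w = r
    · subst hwr
      rw [if_neg (Finset.notMem_erase w _), if_pos rfl, if_pos rfl]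
      have hpos : 1 ≤ Fintype.card (Finset (Fin d)) := Fintype.card_pos
      simp only [Finset.sum_const, smul_eq_mul, Nat.mul_one, Finset.card_univ,
        Finset.card_erase_of_mem (Finset.mem_univ w)]
      omega
    · rw [if_pos (Finset.mem_erase.mpr ⟨hwr, Finset.mem_univ w⟩), if_neg hwr]
  unfold IsStackableAt IsStackableConf
  rw [← hfin]
  exact hres

end CupStack


theorem cube_stackable_le_twenty (d : ℕ) (hd1 : 1 ≤ d) (hd2 : d ≤ 20) :
    IsStackable (cubeGraph d) := by
  exact CupStack.main_stackable hd2
end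

section
/- Let G be a finite connected simple graph and r a vertex of eccentricity 2 (max over vertices v of dist_G(r,v) equals 2). Then G is r-stackable if and only if G has a matching that saturates N_2(r), i.e. there is a set M of pairwise vertex-disjoint edges of G such that every vertex at distance exactly 2 from r is an endpoint of some edge of M. -/
section Aux

variable {V : Type*} [DecidableEq V] {G : SimpleGraph V} {r : V}

/-- "Bad" (a stack of size ≥ 3 off the root) persists under cup moves,
provided the root has eccentricity ≤ 2. -/
lemma cupmove_bad_persists (hecc : ∀ v : V, G.dist r v ≤ 2) {C C' : V → ℕ}
    (h : CupMove G C C') (hb : ∃ v, v ≠ r ∧ 3 ≤ C v) : ∃ v, v ≠ r ∧ 3 ≤ C' v := by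
  obtain ⟨u, w, huw, hu1, hw1, hd, hC'⟩ := h
  obtain ⟨v, hvr, hv3⟩ := hb
  have hcomm : G.dist u w = G.dist w u := SimpleGraph.dist_comm
  by_cases hvu : v = u
  · rw [hvu] at hv3
    refine ⟨w, ?_, ?_⟩
    · rintro rfl
      have h2 := hecc u
      omega
    · rw [hC' w, if_neg (Ne.symm huw), if_pos rfl]
      omega
  · refine ⟨v, hvr, ?_⟩
    rw [hC' v, if_neg hvu]
    split_ifs with h1
    · rw [h1] at hv3; omega
    · omega

lemma reach_not_bad (hecc : ∀ v : V, G.dist r v ≤ 2) {C D : V → ℕ}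
    (h : Relation.ReflTransGen (CupMove G) C D)
    (hD : ¬ ∃ v, v ≠ r ∧ 3 ≤ D v) : ¬ ∃ v, v ≠ r ∧ 3 ≤ C v := by
  induction h using Relation.ReflTransGen.head_induction_on with
  | refl => exact hD
  | head hac _ ih => exact fun hb => ih (cupmove_bad_persists hecc hac hb)

/-- Forward direction workhorse. -/
lemma forward_aux (hecc : ∀ v : V, G.dist r v ≤ 2) {C D : V → ℕ}
    (hD : ∀ v, v ≠ r → D v = 0)
    (h : Relation.ReflTransGen (CupMove G) C D) :
    ∃ M : G.Subgraph, M.IsMatching ∧ (∀ x ∈ M.verts, C x = 1) ∧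
      {v : V | G.dist r v = 2 ∧ C v = 1} ⊆ M.verts := by
  induction h using Relation.ReflTransGen.head_induction_on with
  | refl =>
    refine ⟨⊥, ?_, ?_, ?_⟩
    · intro v hv
      simp at hv
    · intro x hx
      simp at hx
    · rintro v ⟨hv2, hv1⟩
      exfalso
      have hvr : v ≠ r := by rintro rfl; simp [SimpleGraph.dist_self] at hv2
      rw [hD v hvr] at hv1
      omega
  | @head C c hac hcD ih =>
    obtain ⟨M', hM'match, hM'one, hM'cov⟩ := ih
    have hnb : ¬ ∃ v, v ≠ r ∧ 3 ≤ c v :=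
      reach_not_bad hecc hcD (by rintro ⟨v, hvr, hv3⟩; rw [hD v hvr] at hv3; omega)
    push_neg at hnb
    obtain ⟨u, w, huw, hu1, hw1, hd, hC'⟩ := hac
    have hcu : c u = 0 := by rw [hC' u, if_pos rfl]
    have hcw : c w = C u + C w := by rw [hC' w, if_neg (Ne.symm huw), if_pos rfl]
    have hcoth : ∀ x, x ≠ u → x ≠ w → c x = C x := by
      intro x h1 h2; rw [hC' x, if_neg h1, if_neg h2]
    by_cases hS : (G.dist r u = 2 ∧ C u = 1) ∨ (G.dist r w = 2 ∧ C w = 1)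
    · -- this move pairs two one-cup vertices, one of which is at distance 2
      have key : G.Adj u w ∧ C u = 1 ∧ C w = 1 := by
        rcases hS with ⟨hdu, hCu⟩ | ⟨hdw, hCw⟩
        · have hadj : G.Adj u w := SimpleGraph.dist_eq_one_iff_adj.mp (by rw [hd, hCu])
          have hwr : w ≠ r := by
            intro hwr
            have hadj' : G.Adj u r := by rw [← hwr]; exact hadj
            have h1 : G.dist r u = 1 := SimpleGraph.dist_eq_one_iff_adj.mpr hadj'.symm
            omega
          have h2 : c w < 3 := hnb w hwr
          rw [hcw, hCu] at h2
          exact ⟨hadj, hCu, by omega⟩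
        · have hwr : w ≠ r := by
            rintro rfl
            simp [SimpleGraph.dist_self] at hdw
          have hur : u ≠ r := by
            rintro rfl
            have h3 := hnb w hwr
            rw [hcw, ← hd] at h3
            omega
          have h2 : c w < 3 := hnb w hwr
          rw [hcw, hCw] at h2
          have hCu : C u = 1 := by omega
          exact ⟨SimpleGraph.dist_eq_one_iff_adj.mp (by rw [hd, hCu]), hCu, hCw⟩
      obtain ⟨hadj, hCu, hCw⟩ := key
      have huM' : u ∉ M'.verts := fun h => by
        have := hM'one u h; rw [hcu] at this; omega
      have hwM' : w ∉ M'.verts := fun h => by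
        have := hM'one w h; rw [hcw, hCu, hCw] at this; omega
      refine ⟨M' ⊔ G.subgraphOfAdj hadj, ?_, ?_, ?_⟩
      · refine hM'match.sup (SimpleGraph.Subgraph.IsMatching.subgraphOfAdj hadj) ?_
        rw [hM'match.support_eq_verts,
          (SimpleGraph.Subgraph.IsMatching.subgraphOfAdj hadj).support_eq_verts,
          SimpleGraph.subgraphOfAdj_verts]
        rw [Set.disjoint_right]
        rintro x (rfl | rfl) hx
        · exact huM' hx
        · exact hwM' hx
      · intro x hx
        rw [SimpleGraph.Subgraph.verts_sup] at hx
        rcases hx with hx | hx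
        · have hxu : x ≠ u := fun h => huM' (h ▸ hx)
          have hxw : x ≠ w := fun h => hwM' (h ▸ hx)
          rw [← hcoth x hxu hxw]
          exact hM'one x hx
        · rw [SimpleGraph.subgraphOfAdj_verts] at hx
          rcases hx with rfl | rfl
          · exact hCu
          · exact hCw
      · rintro v ⟨hv2, hv1⟩
        rw [SimpleGraph.Subgraph.verts_sup]
        by_cases hvu : v = u
        · right; rw [SimpleGraph.subgraphOfAdj_verts]; exact Or.inl hvu
        by_cases hvw : v = w
        · right; rw [SimpleGraph.subgraphOfAdj_verts]; exact Or.inr hvw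
        · left
          exact hM'cov ⟨hv2, by rw [hcoth v hvu hvw]; exact hv1⟩
    · -- the move does not involve one-cup distance-2 vertices
      push_neg at hS
      refine ⟨M', hM'match, ?_, ?_⟩
      · intro x hx
        have hcx := hM'one x hx
        have hxu : x ≠ u := by rintro rfl; rw [hcu] at hcx; omega
        have hxw : x ≠ w := by rintro rfl; rw [hcw] at hcx; omega
        rw [← hcoth x hxu hxw]; exact hcx
      · rintro v ⟨hv2, hv1⟩
        have hvu : v ≠ u := by rintro rfl; exact hS.1 hv2 hv1
        have hvw : v ≠ w := by rintro rfl; exact hS.2 hv2 hv1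
        exact hM'cov ⟨hv2, by rw [hcoth v hvu hvw]; exact hv1⟩

/-- Convenient constructor for cup moves. -/
lemma cupmove_of (u v : V) (huv : u ≠ v) {C : V → ℕ} (h1 : 1 ≤ C u) (h2 : 1 ≤ C v)
    (hd : G.dist u v = C u) :
    CupMove G C (fun w => if w = u then 0 else if w = v then C u + C v else C w) :=
  ⟨u, v, huv, h1, h2, hd, fun _ => rfl⟩

/-- Auxiliary configuration: `m` cups on `r`, one cup on each vertex of `T`. -/
def conf (r : V) (T : Finset V) (m : ℕ) : V → ℕ :=
  fun v => if v = r then m else if v ∈ T then 1 else 0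

/-- Backward direction workhorse. -/
lemma backward_aux (hG : G.Connected) (hecc : ∀ v : V, G.dist r v ≤ 2)
    (M : G.Subgraph) (hM : M.IsMatching) (p : V → V)
    (hp : ∀ v, G.dist r v = 2 → M.Adj v (p v) ∧ ∀ w, M.Adj v w → w = p v) :
    ∀ (n : ℕ) (T : Finset V) (m : ℕ), T.card ≤ n → 1 ≤ m → r ∉ T →
      (∀ v ∈ T, G.dist r v = 2 → p v ∈ T) →
      Relation.ReflTransGen (CupMove G) (conf r T m)
        (fun w => if w = r then m + T.card else 0) := by
  intro n
  induction n with
  | zero =>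
    intro T m hcard hm hrT hinv
    have hT : T = ∅ := Finset.card_eq_zero.mp (Nat.le_zero.mp hcard)
    subst hT
    have he : conf r (∅ : Finset V) m = fun w => if w = r then m + (∅ : Finset V).card else 0 := by
      funext x; simp [conf]
    rw [he]
  | succ n ih =>
    intro T m hcard hm hrT hinv
    by_cases hTe : T = ∅
    · subst hTe
      have he : conf r (∅ : Finset V) m = fun w => if w = r then m + (∅ : Finset V).card else 0 := by
        funext x; simp [conf]
      rw [he]
    · by_cases h2 : ∃ v ∈ T, G.dist r v = 2
      · -- pair a distance-2 vertex with its matching partner, then move both to r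
        obtain ⟨v, hvT, hv2⟩ := h2
        obtain ⟨hMadj, huniq⟩ := hp v hv2
        set z := p v with hz
        have hzT : z ∈ T := hinv v hvT hv2
        have hGadj : G.Adj v z := M.adj_sub hMadj
        have hzv : z ≠ v := hGadj.ne'
        have hvr : v ≠ r := fun h => hrT (h ▸ hvT)
        have hzr : z ≠ r := fun h => hrT (h ▸ hzT)
        have hconfv : conf r T m v = 1 := by simp [conf, hvr, hvT]
        have hconfz : conf r T m z = 1 := by simp [conf, hzr, hzT]
        have hdvr : G.dist v r = 2 := by
          rw [show G.dist v r = G.dist r v from SimpleGraph.dist_comm]; exact hv2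
        have s1 : CupMove G (conf r T m)
            (fun w => if w = z then 0 else if w = v then conf r T m z + conf r T m v
              else conf r T m w) :=
          cupmove_of z v hzv (by rw [hconfz]) (by rw [hconfv])
            (by rw [hconfz]; exact SimpleGraph.dist_eq_one_iff_adj.mpr hGadj.symm)
        have e1 : (fun w => if w = z then 0 else if w = v then conf r T m z + conf r T m v
              else conf r T m w)
            = (fun x => if x = v then 2 else conf r (T.erase z) m x) := by
          funext x
          by_cases hxz : x = z
          · subst hxz
            simp [conf, hzv, hzr, Finset.mem_erase]
          · by_cases hxv : x = v
            · subst hxv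
              simp [conf, Ne.symm hzv, hvr, hvT, hzr, hzT, hconfz, hconfv]
            · simp [conf, hxz, hxv, Finset.mem_erase]
        have s2 : CupMove G (fun x => if x = v then 2 else conf r (T.erase z) m x)
            (fun w => if w = v then 0 else if w = r then
              (fun x => if x = v then 2 else conf r (T.erase z) m x) v +
              (fun x => if x = v then 2 else conf r (T.erase z) m x) r
              else (fun x => if x = v then 2 else conf r (T.erase z) m x) w) :=
          cupmove_of v r hvr (by simp) (by simp [Ne.symm hvr, conf]; omega)
            (by simp [hdvr])
        have e2 : (fun w => if w = v then 0 else if w = r then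
              (fun x => if x = v then 2 else conf r (T.erase z) m x) v +
              (fun x => if x = v then 2 else conf r (T.erase z) m x) r
              else (fun x => if x = v then 2 else conf r (T.erase z) m x) w)
            = conf r ((T.erase z).erase v) (m + 2) := by
          funext x
          by_cases hxv : x = v
          · subst hxv
            simp [conf, hvr, Finset.mem_erase]
          · by_cases hxr : x = r
            · subst hxr
              simp [conf, Ne.symm hvr, Ne.symm hzr, hzr, Finset.mem_erase]
              omega
            · simp [conf, hxv, hxr, Finset.mem_erase]
        have hvT' : v ∈ T.erase z := Finset.mem_erase.mpr ⟨Ne.symm hzv, hvT⟩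
        have hc1 : (T.erase z).card = T.card - 1 := Finset.card_erase_of_mem hzT
        have hc2 : ((T.erase z).erase v).card = (T.erase z).card - 1 :=
          Finset.card_erase_of_mem hvT'
        have hc3 : 0 < (T.erase z).card := Finset.card_pos.mpr ⟨v, hvT'⟩
        have hc4 : 0 < T.card := Finset.card_pos.mpr ⟨v, hvT⟩
        have hinv' : ∀ x ∈ (T.erase z).erase v, G.dist r x = 2 → p x ∈ (T.erase z).erase v := by
          intro x hx hx2
          have hxv : x ≠ v := (Finset.mem_erase.mp hx).1
          have hxz : x ≠ z := (Finset.mem_erase.mp (Finset.mem_erase.mp hx).2).1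
          have hxT : x ∈ T := (Finset.mem_erase.mp (Finset.mem_erase.mp hx).2).2
          have hpxT : p x ∈ T := hinv x hxT hx2
          obtain ⟨hMx, hux⟩ := hp x hx2
          rw [Finset.mem_erase, Finset.mem_erase]
          refine ⟨?_, ?_, hpxT⟩
          · -- p x ≠ v
            intro hpxv
            have : M.Adj v x := by rw [← hpxv]; exact hMx.symm
            exact hxz (huniq x this)
          · -- p x ≠ z
            intro hpxz
            have hz1 : M.Adj z x := by rw [← hpxz]; exact hMx.symm
            have hz2 : M.Adj z v := hMadj.symm
            obtain ⟨w0, _, hw0u⟩ := hM (M.edge_vert hz1)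
            exact hxv ((hw0u x hz1).trans (hw0u v hz2).symm)
        have key := ih ((T.erase z).erase v) (m + 2) (by omega) (by omega)
          (fun h => hrT (Finset.mem_of_mem_erase (Finset.mem_of_mem_erase h))) hinv'
        have htar : (fun w : V => if w = r then (m + 2) + ((T.erase z).erase v).card else 0)
            = (fun w : V => if w = r then m + T.card else 0) := by
          funext x
          by_cases hx : x = r <;> simp [hx]
          omega
        rw [htar] at key
        exact Relation.ReflTransGen.head (e1 ▸ s1) (Relation.ReflTransGen.head (e2 ▸ s2) key)
      · -- all remaining vertices are neighbours of r; move one to r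
        obtain ⟨v, hvT⟩ := Finset.nonempty_iff_ne_empty.mpr hTe
        have hvr : v ≠ r := fun h => hrT (h ▸ hvT)
        have hd1 : G.dist r v = 1 := by
          have h0 : 0 < G.dist r v := hG.pos_dist_of_ne (Ne.symm hvr)
          have hle := hecc v
          have hne2 : G.dist r v ≠ 2 := fun h => h2 ⟨v, hvT, h⟩
          omega
        have hconfv : conf r T m v = 1 := by simp [conf, hvr, hvT]
        have s1 : CupMove G (conf r T m)
            (fun w => if w = v then 0 else if w = r then conf r T m v + conf r T m r
              else conf r T m w) :=
          cupmove_of v r hvr (by rw [hconfv]) (by simp [conf]; omega)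
            (by rw [hconfv, show G.dist v r = G.dist r v from SimpleGraph.dist_comm]; exact hd1)
        have e1 : (fun w => if w = v then 0 else if w = r then conf r T m v + conf r T m r
              else conf r T m w) = conf r (T.erase v) (m + 1) := by
          funext x
          by_cases hxv : x = v
          · subst hxv
            simp [conf, hvr, Finset.mem_erase]
          · by_cases hxr : x = r
            · subst hxr
              simp [conf, hvr, Ne.symm hvr, hvT, Finset.mem_erase]
              omega
            · simp [conf, hxv, hxr, Finset.mem_erase]
        have hc1 : (T.erase v).card = T.card - 1 := Finset.card_erase_of_mem hvT
        have hc4 : 0 < T.card := Finset.card_pos.mpr ⟨v, hvT⟩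
        have key := ih (T.erase v) (m + 1) (by omega) (by omega)
          (fun h => hrT (Finset.mem_of_mem_erase h))
          (fun x hx hx2 => absurd ⟨x, Finset.mem_of_mem_erase hx, hx2⟩ h2)
        have htar : (fun w : V => if w = r then (m + 1) + (T.erase v).card else 0)
            = (fun w : V => if w = r then m + T.card else 0) := by
          funext x
          by_cases hx : x = r <;> simp [hx]
          omega
        rw [htar] at key
        exact Relation.ReflTransGen.head (e1 ▸ s1) key

end Aux

theorem ecc_two_stackable_iff_matching {V : Type*} [Fintype V] [DecidableEq V]
    (G : SimpleGraph V) (hG : G.Connected) (r : V)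
    (hecc_le : ∀ v : V, G.dist r v ≤ 2) (hecc_eq : ∃ v : V, G.dist r v = 2) :
    IsStackableAt G r ↔
      ∃ M : G.Subgraph, M.IsMatching ∧ {v : V | G.dist r v = 2} ⊆ M.verts := by
  constructor
  · intro h
    unfold IsStackableAt IsStackableConf at h
    obtain ⟨M, hmatch, hone, hcov⟩ := forward_aux hecc_le (by intro v hv; simp [hv]) h
    exact ⟨M, hmatch, fun v hv => hcov ⟨hv, rfl⟩⟩
  · rintro ⟨M, hmatch, hcov⟩
    classical
    have hex : ∀ v : V, ∃ z : V, G.dist r v = 2 → M.Adj v z ∧ ∀ w, M.Adj v w → w = z := by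
      intro v
      by_cases hv : G.dist r v = 2
      · obtain ⟨z, hz1, hz2⟩ := hmatch (hcov hv)
        exact ⟨z, fun _ => ⟨hz1, hz2⟩⟩
      · exact ⟨r, fun h => absurd h hv⟩
    choose p hp using hex
    have hinv : ∀ v ∈ Finset.univ.erase r, G.dist r v = 2 → p v ∈ Finset.univ.erase r := by
      intro v _ hv2
      refine Finset.mem_erase.mpr ⟨?_, Finset.mem_univ _⟩
      intro hpvr
      have hadj : G.Adj v (p v) := M.adj_sub (hp v hv2).1
      rw [hpvr] at hadj
      have : G.dist r v = 1 := SimpleGraph.dist_eq_one_iff_adj.mpr hadj.symm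
      omega
    have key := backward_aux hG hecc_le M hmatch p hp (Finset.univ.erase r).card
      (Finset.univ.erase r) 1 le_rfl le_rfl (Finset.notMem_erase r _) hinv
    unfold IsStackableAt IsStackableConf
    have h1 : (fun _ : V => (1 : ℕ)) = conf r (Finset.univ.erase r) 1 := by
      funext x
      by_cases hx : x = r <;> simp [conf, hx]
    have hcpos : 0 < Fintype.card V := Fintype.card_pos_iff.mpr ⟨r⟩
    have hsum : (∑ _v : V, (fun _ : V => (1 : ℕ)) _v) = 1 + (Finset.univ.erase r).card := by
      simp [Finset.card_erase_of_mem, Finset.card_univ]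
      omega
    simp only [hsum]
    rw [h1]
    exact key
end

section
/- Let T be a finite tree and r a vertex of T of eccentricity 2 (max over vertices v of dist_T(r,v) equals 2). Then T is r-stackable if and only if every vertex of T other than r has degree at most 2 (equivalently, T is a spider rooted at r). -/
open Finset Function SimpleGraph Relation
set_option linter.unusedSectionVars false
set_option maxHeartbeats 1000000

def Anc {V : Type*} (F : V → V) (w v : V) : Prop := ∃ k : ℕ, F^[k] w = v

lemma Anc.trans {V : Type*} {F : V → V} {a b c : V} (h1 : Anc F a b) (h2 : Anc F b c) :
    Anc F a c := by
  obtain ⟨k, hk⟩ := h1; obtain ⟨l, hl⟩ := h2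
  exact ⟨l + k, by rw [Function.iterate_add_apply, hk, hl]⟩

lemma Anc.step {V : Type*} (F : V → V) (v : V) : Anc F v (F v) := ⟨1, rfl⟩

lemma anc_antisymm {V : Type*} {F : V → V} {r v w : V} (hFr : F r = r)
    (hreach : ∃ m, F^[m] v = r) (h1 : Anc F w v) (h2 : Anc F v w) : v = w := by
  obtain ⟨k, hk⟩ := h1; obtain ⟨l, hl⟩ := h2
  obtain ⟨m, hm⟩ := hreach
  rcases Nat.eq_zero_or_pos (k + l) with h0 | hpos
  · have : k = 0 := by omega
    rw [this] at hk; exact hk.symm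
  · have hp : F^[k + l] v = v := by rw [Function.iterate_add_apply, hl, hk]
    have hper : ∀ t : ℕ, F^[(k + l) * t] v = v := by
      intro t
      induction t with
      | zero => simp
      | succ t ih =>
        have e : (k + l) * (t + 1) = (k + l) * t + (k + l) := by ring
        rw [e, Function.iterate_add_apply, hp, ih]
    have hvr : v = r := by
      have h1' : (k + l) * m = ((k + l) * m - m) + m := by
        have : m ≤ (k + l) * m := Nat.le_mul_of_pos_left m hpos
        omega
      have h2' := hper m
      rw [h1', Function.iterate_add_apply, hm, Function.iterate_fixed hFr] at h2'
      exact h2'.symm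
    have hwr : w = r := by rw [← hl, hvr, Function.iterate_fixed hFr]
    rw [hvr, hwr]

section CupAux
variable {V : Type*} [Fintype V] [DecidableEq V]

lemma sum_eq_of_eq_off_two (u v : V) (huv : u ≠ v) (g g' : V → ℕ)
    (h : ∀ w, w ≠ u → w ≠ v → g w = g' w) (h2 : g u + g v = g' u + g' v) :
    ∑ w, g w = ∑ w, g' w := by
  have hv : v ∈ Finset.univ.erase u := Finset.mem_erase.mpr ⟨huv.symm, Finset.mem_univ v⟩
  have e1 : ∀ f : V → ℕ, ∑ w, f w = f u + (f v + ∑ w ∈ (Finset.univ.erase u).erase v, f w) := by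
    intro f
    rw [← Finset.add_sum_erase _ f (Finset.mem_univ u), ← Finset.add_sum_erase _ f hv]
  rw [e1 g, e1 g']
  have he : ∑ w ∈ (Finset.univ.erase u).erase v, g w
      = ∑ w ∈ (Finset.univ.erase u).erase v, g' w :=
    Finset.sum_congr rfl fun w hw => by
      rw [Finset.mem_erase, Finset.mem_erase] at hw
      exact h w hw.2.1 hw.1
  omega

open scoped Classical in
noncomputable def subW (F : V → V) (C : V → ℕ) (v : V) : ℕ :=
  ∑ w ∈ Finset.univ.filter (fun w => Anc F w v), C w

open scoped Classical in
noncomputable def SubT (F : V → V) (v : V) : Finset V :=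
  Finset.univ.filter (fun w => Anc F w v)

lemma mem_SubT {F : V → V} {w v : V} : w ∈ SubT F v ↔ Anc F w v := by
  classical
  rw [SubT, Finset.mem_filter]
  simp

lemma subW_ones (F : V → V) (v : V) : subW F (fun _ => 1) v = (SubT F v).card := by
  rw [subW, SubT]
  exact (Finset.card_eq_sum_ones _).symm

def Good (G : SimpleGraph V) (C : V → ℕ) (r : V) : Prop :=
  1 ≤ C r ∧ ∃ F : V → V, F r = r ∧
    ∀ v, 1 ≤ C v → v ≠ r →
      (1 ≤ C (F v) ∧ (∃ k, F^[k] v = r) ∧ subW F C v = G.dist v (F v))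

lemma not_good_ones (G : SimpleGraph V) (r : V) (hconn : G.Connected)
    (hecc : ∀ v, G.dist r v ≤ 2)
    (a x y : V) (har : a ≠ r) (hxr : x ≠ r) (hyr : y ≠ r) (hxy : x ≠ y)
    (hax : G.Adj a x) (hay : G.Adj a y)
    (hux : ∀ w, G.Adj w x → w = a) (huy : ∀ w, G.Adj w y → w = a) :
    ¬ Good G (fun _ => 1) r := by
  rintro ⟨-, F, hFr, hF⟩
  have hF' : ∀ v : V, v ≠ r → (∃ k, F^[k] v = r) ∧ (SubT F v).card = G.dist v (F v) := by
    intro v hv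
    obtain ⟨-, h2, h3⟩ := hF v le_rfl hv
    exact ⟨h2, by rw [← subW_ones]; exact h3⟩
  have hreach : ∀ v : V, ∃ m, F^[m] v = r := by
    intro v; by_cases hv : v = r
    · exact ⟨0, by simp [hv]⟩
    · exact (hF' v hv).1
  set s : V → ℕ := fun v => (SubT F v).card with hsdef
  have hsd : ∀ v, v ≠ r → s v = G.dist v (F v) := fun v hv => (hF' v hv).2
  have hmem_self : ∀ v : V, v ∈ SubT F v := fun v => mem_SubT.mpr ⟨0, rfl⟩
  have hone : ∀ v, 1 ≤ s v := fun v => Finset.card_pos.mpr ⟨v, hmem_self v⟩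
  have hantisym : ∀ v w, Anc F w v → Anc F v w → v = w := fun v w h1 h2 =>
    anc_antisymm hFr (hreach v) h1 h2
  have hrnot : ∀ v, v ≠ r → ¬ Anc F r v := by
    rintro v hv ⟨k, hk⟩
    rw [Function.iterate_fixed hFr] at hk; exact hv hk.symm
  have hFne : ∀ v, v ≠ r → F v ≠ v := by
    intro v hv he
    have h1 := hsd v hv
    rw [he, SimpleGraph.dist_self] at h1
    have := hone v; omega
  have hsub : ∀ v, SubT F v ⊆ SubT F (F v) := by
    intro v w hw; exact mem_SubT.mpr ((mem_SubT.mp hw).trans (Anc.step F v))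
  have hFnotmem : ∀ v, v ≠ r → F v ∉ SubT F v := by
    intro v hv hmem
    exact hFne v hv (hantisym v (F v) (mem_SubT.mp hmem) (Anc.step F v)).symm
  have hstep : ∀ v, v ≠ r → s v + 1 ≤ s (F v) := by
    intro v hv
    have h1 : insert (F v) (SubT F v) ⊆ SubT F (F v) := by
      intro w hw; rcases Finset.mem_insert.mp hw with h | h
      · rw [h]; exact hmem_self (F v)
      · exact hsub v h
    have h2 : (insert (F v) (SubT F v)).card = s v + 1 :=
      Finset.card_insert_of_notMem (hFnotmem v hv)
    have h3 := Finset.card_le_card h1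
    rw [h2] at h3
    exact h3
  have hvr2 : ∀ v : V, G.dist v r ≤ 2 := fun v => by rw [SimpleGraph.dist_comm]; exact hecc v
  have hdr : ∀ u w : V, G.dist u w ≤ 4 := by
    intro u w
    have h1 : G.dist u w ≤ G.dist u r + G.dist r w := hconn.dist_triangle
    have h2 := hvr2 u; have h3 := hecc w
    omega
  have hbig : ∀ v, v ≠ r → s v ≤ 2 := by
    intro v hv
    by_contra hlt
    push_neg at hlt
    have h1 : G.dist v (F v) = s v := (hsd v hv).symm
    have hFvr : F v ≠ r := by
      intro he; rw [he] at h1; have := hvr2 v; omega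
    have h2 : s v + 1 ≤ s (F v) := hstep v hv
    have h1' : G.dist (F v) (F (F v)) = s (F v) := (hsd _ hFvr).symm
    have hFFvr : F (F v) ≠ r := by
      intro he; rw [he] at h1'; have := hvr2 (F v); omega
    have h3 : s (F v) + 1 ≤ s (F (F v)) := hstep _ hFvr
    have h1'' : G.dist (F (F v)) (F (F (F v))) = s (F (F v)) := (hsd _ hFFvr).symm
    have := hdr (F (F v)) (F (F (F v)))
    omega
  have key : ∀ z, z ≠ r → G.Adj a z → (∀ w, G.Adj w z → w = a) →
      (F z = a ∨ (F a = z ∧ SubT F a = {a})) := by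
    intro z hzr haz huz
    have hsz := hbig z hzr
    have h1 : G.dist z (F z) = s z := (hsd z hzr).symm
    have hone' := hone z
    have hcases : s z = 1 ∨ s z = 2 := by omega
    rcases hcases with h | h
    · left
      rw [h] at h1
      have hadj : G.Adj z (F z) := SimpleGraph.dist_eq_one_iff_adj.mp h1
      exact huz (F z) hadj.symm
    · right
      have hcard : (SubT F z).card = 2 := h
      have herase : ((SubT F z).erase z).card = 1 := by
        rw [Finset.card_erase_of_mem (hmem_self z), hcard]
      obtain ⟨c, hc⟩ := Finset.card_eq_one.mp herase
      have hcz : c ≠ z := by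
        have hmem : c ∈ (SubT F z).erase z := by rw [hc]; exact Finset.mem_singleton_self c
        exact (Finset.mem_erase.mp hmem).1
      have hcmem : c ∈ SubT F z := by
        have hmem : c ∈ (SubT F z).erase z := by rw [hc]; exact Finset.mem_singleton_self c
        exact Finset.mem_of_mem_erase hmem
      have hSz : SubT F z = {z, c} := by
        have hins := Finset.insert_erase (hmem_self z)
        rw [hc] at hins
        rw [← hins]
      have hcr : c ≠ r := by
        intro he; rw [he] at hcmem; exact hrnot z hzr (mem_SubT.mp hcmem)
      obtain ⟨k, hk⟩ := mem_SubT.mp hcmem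
      have hk0 : k ≠ 0 := by rintro rfl; exact hcz hk
      have hFcmem : F c ∈ SubT F z := by
        apply mem_SubT.mpr
        obtain ⟨k', rfl⟩ : ∃ k', k = k' + 1 := ⟨k - 1, by omega⟩
        rw [Function.iterate_succ_apply] at hk
        exact ⟨k', hk⟩
      have hFc : F c = z := by
        rw [hSz] at hFcmem
        rcases Finset.mem_insert.mp hFcmem with h' | h'
        · exact h'
        · exact absurd (Finset.mem_singleton.mp h') (hFne c hcr)
      have hsubc : SubT F c ⊆ {c} := by
        intro w hw
        have hwz : w ∈ SubT F z := mem_SubT.mpr ((mem_SubT.mp hw).trans (mem_SubT.mp hcmem))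
        rw [hSz] at hwz
        rcases Finset.mem_insert.mp hwz with h' | h'
        · exfalso
          subst h'
          exact hcz (hantisym c w (mem_SubT.mp hw) (mem_SubT.mp hcmem))
        · exact h'
      have hsc : s c = 1 := by
        have h1' := hone c
        have h2' : s c ≤ 1 := by simpa using Finset.card_le_card hsubc
        omega
      have hdc : G.dist c (F c) = 1 := by rw [← hsd c hcr, hsc]
      have hadj : G.Adj c z := by
        rw [hFc] at hdc; exact SimpleGraph.dist_eq_one_iff_adj.mp hdc
      have hca : c = a := huz c hadj
      subst hca
      refine ⟨hFc, ?_⟩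
      apply Finset.Subset.antisymm hsubc
      intro w hw; rw [Finset.mem_singleton] at hw; rw [hw]; exact hmem_self c
  have hxa : x ≠ a := hax.ne.symm
  have hya : y ≠ a := hay.ne.symm
  rcases key x hxr hax hux with h1 | ⟨h1, h1'⟩
  · rcases key y hyr hay huy with h2 | ⟨h2, h2'⟩
    · have hmx : x ∈ SubT F a := mem_SubT.mpr ⟨1, by simpa using h1⟩
      have hmy : y ∈ SubT F a := mem_SubT.mpr ⟨1, by simpa using h2⟩
      have hma : a ∈ SubT F a := hmem_self a
      have h3 : ({x, y, a} : Finset V) ⊆ SubT F a := by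
        intro w hw
        simp only [Finset.mem_insert, Finset.mem_singleton] at hw
        rcases hw with rfl | rfl | rfl
        · exact hmx
        · exact hmy
        · exact hma
      have hcard3 : ({x, y, a} : Finset V).card = 3 := by
        rw [Finset.card_insert_of_notMem (by simp [hxy, hxa]),
          Finset.card_insert_of_notMem (by simp [hya])]
        rfl
      have h4 := Finset.card_le_card h3
      rw [hcard3] at h4
      have h4' : 3 ≤ s a := h4
      have := hbig a har
      omega
    · have hmx : x ∈ SubT F a := mem_SubT.mpr ⟨1, by simpa using h1⟩
      rw [h2'] at hmx
      exact hxa (Finset.mem_singleton.mp hmx)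
  · rcases key y hyr hay huy with h2 | ⟨h2, h2'⟩
    · have hmy : y ∈ SubT F a := mem_SubT.mpr ⟨1, by simpa using h2⟩
      rw [h1'] at hmy
      exact hya (Finset.mem_singleton.mp hmy)
    · exact hxy (h1.symm.trans h2)


open scoped Classical in
lemma subW_eq_sum_ite (F : V → V) (C : V → ℕ) (v : V) :
    subW F C v = ∑ w : V, if Anc F w v then C w else 0 := by
  rw [subW, Finset.sum_filter]


lemma good_of_cupMove {G : SimpleGraph V} {C C' : V → ℕ} {r : V}
    (h : CupMove G C C') (hg : Good G C' r) : Good G C r := by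
  obtain ⟨u, v, huv, hCu, hCv, hd, hC'⟩ := h
  obtain ⟨hr', F', hF'r, hF'⟩ := hg
  have C'u0 : C' u = 0 := by rw [hC' u]; simp
  have C'v : C' v = C u + C v := by rw [hC' v]; simp [huv.symm, huv]
  have hCw : ∀ w, w ≠ u → w ≠ v → C' w = C w := by
    intro w h1 h2; rw [hC' w, if_neg h1, if_neg h2]
  have hur : u ≠ r := by rintro rfl; omega
  have hCr : 1 ≤ C r := by
    by_cases hvr : r = v
    · rw [hvr]; exact hCv
    · rw [← hCw r hur.symm hvr]; exact hr'
  have hv' : 1 ≤ C' v := by omega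
  set F : V → V := Function.update F' u v with hF
  have hFw : ∀ w, w ≠ u → F w = F' w := fun w h => Function.update_of_ne h _ _
  have hFu : F u = v := Function.update_self _ _ _
  have supp' : ∀ w, 1 ≤ C' w → w ≠ u := by intro w hw; rintro rfl; omega
  have mapsto : ∀ w, 1 ≤ C' w → 1 ≤ C' (F' w) := by
    intro w hw
    by_cases hwr : w = r
    · rw [hwr, hF'r]; exact hr'
    · exact (hF' w hw hwr).1
  have orbit : ∀ (k : ℕ) (w : V), 1 ≤ C' w → F^[k] w = F'^[k] w ∧ 1 ≤ C' (F'^[k] w) := by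
    intro k
    induction k with
    | zero => intro w hw; exact ⟨rfl, hw⟩
    | succ k ih =>
      intro w hw
      obtain ⟨he, hz⟩ := ih w hw
      constructor
      · rw [Function.iterate_succ_apply', Function.iterate_succ_apply', he,
          hFw _ (supp' _ hz)]
      · rw [Function.iterate_succ_apply']
        exact mapsto _ hz
  have ancEq : ∀ w t, 1 ≤ C' w → (Anc F w t ↔ Anc F' w t) := by
    intro w t hw
    constructor
    · rintro ⟨k, hk⟩; exact ⟨k, by rw [← (orbit k w hw).1]; exact hk⟩
    · rintro ⟨k, hk⟩; exact ⟨k, by rw [(orbit k w hw).1]; exact hk⟩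
  have supp_anc_u : ∀ w, 1 ≤ C' w → ¬ Anc F w u := by
    rintro w hw ⟨k, hk⟩
    have := (orbit k w hw).2
    rw [← (orbit k w hw).1, hk, C'u0] at this
    omega
  have anc_u_iff : ∀ t, t ≠ u → (Anc F u t ↔ Anc F' v t) := by
    intro t htu
    constructor
    · rintro ⟨k, hk⟩
      rcases k with _ | k
      · exact absurd hk.symm htu
      · rw [Function.iterate_succ_apply, hFu, (orbit k v hv').1] at hk
        exact ⟨k, hk⟩
    · rintro ⟨k, hk⟩
      exact ⟨k + 1, by rw [Function.iterate_succ_apply, hFu, (orbit k v hv').1]; exact hk⟩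
  have hsupp_lift : ∀ w, w ≠ u → 1 ≤ C w → 1 ≤ C' w := by
    intro w hwu hw
    by_cases hwv : w = v
    · rw [hwv]; omega
    · rw [hCw w hwu hwv]; exact hw
  refine ⟨hCr, F, by rw [hFw r hur.symm]; exact hF'r, ?_⟩
  intro t hCt htr
  by_cases htu : t = u
  · subst htu
    refine ⟨by rw [hFu]; exact hCv, ?_, ?_⟩
    · -- reach r
      have hreach : ∃ m, F'^[m] v = r := by
        by_cases hvr : v = r
        · exact ⟨0, hvr⟩
        · exact (hF' v hv' hvr).2.1
      obtain ⟨m, hm⟩ := hreach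
      exact ⟨m + 1, by rw [Function.iterate_succ_apply, hFu, (orbit m v hv').1]; exact hm⟩
    · -- subtree sum for u is just C u
      rw [hFu, hd, subW_eq_sum_ite]
      rw [Finset.sum_eq_single_of_mem t (Finset.mem_univ t)
        (fun w _ hwu => ?_)]
      · exact if_pos ⟨0, rfl⟩
      · by_cases hA : Anc F w t
        · rw [if_pos hA]
          by_contra hne
          have hw1 : 1 ≤ C w := by omega
          exact supp_anc_u w (hsupp_lift w hwu hw1) hA
        · rw [if_neg hA]
  · have hC't : 1 ≤ C' t := hsupp_lift t htu hCt
    obtain ⟨h1, h2, h3⟩ := hF' t hC't htr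
    have hFt : F t = F' t := hFw t htu
    refine ⟨?_, ?_, ?_⟩
    · rw [hFt]
      have hne : F' t ≠ u := supp' _ h1
      by_cases hfv : F' t = v
      · rw [hfv]; exact hCv
      · rw [← hCw _ hne hfv]; exact h1
    · obtain ⟨k, hk⟩ := h2
      exact ⟨k, by rw [(orbit k t hC't).1]; exact hk⟩
    · rw [hFt, ← h3, subW_eq_sum_ite, subW_eq_sum_ite]
      apply sum_eq_of_eq_off_two u v huv
      · intro w hwu hwv
        by_cases hw1 : 1 ≤ C w
        · rw [hCw w hwu hwv]
          have := ancEq w t (hsupp_lift w hwu hw1)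
          by_cases hA : Anc F w t
          · rw [if_pos hA, if_pos (this.mp hA)]
          · rw [if_neg hA, if_neg (fun h => hA (this.mpr h))]
        · have hw0 : C w = 0 := by omega
          have hw0' : C' w = 0 := by rw [hCw w hwu hwv]; exact hw0
          simp only [hw0, hw0', ite_self]
      · have hAuv : Anc F u t ↔ Anc F' v t := anc_u_iff t htu
        have hAv : Anc F v t ↔ Anc F' v t := ancEq v t hv'
        by_cases hA : Anc F' v t
        · rw [if_pos (hAuv.mpr hA), if_pos (hAv.mpr hA), if_pos hA, C'v, C'u0, ite_self]
          omega
        · rw [if_neg (fun h => hA (hAuv.mp h)), if_neg (fun h => hA (hAv.mp h)),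
            if_neg hA, C'u0, ite_self]

lemma cupMove_sum {G : SimpleGraph V} {C C' : V → ℕ} (h : CupMove G C C') :
    ∑ w, C' w = ∑ w, C w := by
  obtain ⟨u, v, huv, hCu, hCv, hd, hC'⟩ := h
  apply sum_eq_of_eq_off_two u v huv
  · intro w h1 h2; rw [hC' w, if_neg h1, if_neg h2]
  · rw [hC' u, hC' v, if_pos rfl, if_neg (Ne.symm huv), if_pos rfl]; omega

lemma good_of_steps {G : SimpleGraph V} {C D : V → ℕ} {r : V}
    (h : Relation.ReflTransGen (CupMove G) C D) (hD : Good G D r) : Good G C r := by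
  induction h using Relation.ReflTransGen.head_induction_on with
  | refl => exact hD
  | head hstep _ ih => exact good_of_cupMove hstep ih

lemma good_goal (G : SimpleGraph V) (r : V) {n : ℕ} (hn : 1 ≤ n) :
    Good G (fun w => if w = r then n else 0) r := by
  refine ⟨by simp [hn], id, rfl, ?_⟩
  intro v hv hvr
  simp only [if_neg hvr] at hv
  exact absurd hv (by omega)

end CupAux

section TreeStruct
variable {V : Type*} {T : SimpleGraph V}

lemma mid_of_dist_two {r x : V} (h2 : T.dist r x = 2) : ∃ a, T.Adj r a ∧ T.Adj a x := by
  obtain ⟨p, hp⟩ := SimpleGraph.exists_walk_of_dist_ne_zero (by simp [h2] : T.dist r x ≠ 0)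
  refine ⟨p.getVert 1, ?_, ?_⟩
  · have h := p.adj_getVert_succ (i := 0) (by rw [hp, h2]; omega)
    rwa [SimpleGraph.Walk.getVert_zero] at h
  · have h := p.adj_getVert_succ (i := 1) (by rw [hp, h2]; omega)
    have hl : p.getVert 2 = x := by
      rw [show (2 : ℕ) = p.length by rw [hp, h2]]
      exact p.getVert_length
    rwa [hl] at h

lemma tree_no_triangle (hT : T.IsTree) {u v w : V} (h1 : T.Adj u v) (h2 : T.Adj v w)
    (h3 : T.Adj u w) : False := by
  have hp1 : (SimpleGraph.Walk.cons h3 SimpleGraph.Walk.nil : T.Walk u w).IsPath := by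
    simp [SimpleGraph.Walk.isPath_def, h3.ne]
  have hp2 : (SimpleGraph.Walk.cons h1 (SimpleGraph.Walk.cons h2 SimpleGraph.Walk.nil) :
      T.Walk u w).IsPath := by
    simp [SimpleGraph.Walk.isPath_def, h1.ne, h2.ne, h3.ne]
  have := ((hT.existsUnique_path u w).unique hp1 hp2)
  have hlen := congrArg SimpleGraph.Walk.length this
  simp at hlen

lemma unique_nbr_of_dist_two (hT : T.IsTree) {r x : V} (hecc : ∀ v, T.dist r v ≤ 2)
    (h2 : T.dist r x = 2) :
    ∃ a, T.Adj r a ∧ T.Adj a x ∧ ∀ w, T.Adj w x → w = a := by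
  obtain ⟨a, hra, hax⟩ := mid_of_dist_two h2
  have hxr : x ≠ r := by rintro rfl; rw [SimpleGraph.dist_self] at h2; omega
  refine ⟨a, hra, hax, ?_⟩
  intro w hwx
  by_contra hwa
  have hwr : w ≠ r := by
    rintro rfl
    rw [SimpleGraph.dist_eq_one_iff_adj.mpr hwx] at h2
    omega
  have hd : T.dist r w ≤ 2 := hecc w
  have hd0 : T.dist r w ≠ 0 := by
    intro h0
    exact hwr ((hT.isConnected.dist_eq_zero_iff.mp h0)).symm
  have hcases : T.dist r w = 1 ∨ T.dist r w = 2 := by omega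
  rcases hcases with h | h
  · have hrw : T.Adj r w := SimpleGraph.dist_eq_one_iff_adj.mp h
    have hp1 : (SimpleGraph.Walk.cons hra (SimpleGraph.Walk.cons hax SimpleGraph.Walk.nil) :
        T.Walk r x).IsPath := by
      simp [SimpleGraph.Walk.isPath_def, hra.ne, hax.ne, Ne.symm hxr]
    have hp2 : (SimpleGraph.Walk.cons hrw (SimpleGraph.Walk.cons hwx
        SimpleGraph.Walk.nil) : T.Walk r x).IsPath := by
      simp [SimpleGraph.Walk.isPath_def, hrw.ne, hwx.ne, Ne.symm hxr]
    have heq := ((hT.existsUnique_path r x).unique hp1 hp2)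
    have hsup := congrArg SimpleGraph.Walk.support heq
    simp [SimpleGraph.Walk.support_cons] at hsup
    exact hwa hsup.symm
  · obtain ⟨b, hrb, hbw⟩ := mid_of_dist_two h
    have hbx : b ≠ x := by
      rintro rfl
      rw [SimpleGraph.dist_eq_one_iff_adj.mpr hrb] at h2
      omega
    have hp1 : (SimpleGraph.Walk.cons hra (SimpleGraph.Walk.cons hax SimpleGraph.Walk.nil) :
        T.Walk r x).IsPath := by
      simp [SimpleGraph.Walk.isPath_def, hra.ne, hax.ne, Ne.symm hxr]
    have hp2 : (SimpleGraph.Walk.cons hrb (SimpleGraph.Walk.cons hbw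
        (SimpleGraph.Walk.cons hwx SimpleGraph.Walk.nil)) : T.Walk r x).IsPath := by
      simp [SimpleGraph.Walk.isPath_def, hrb.ne, hbw.ne, hwx.ne, Ne.symm hxr, Ne.symm hwr, hbx]
    have heq := ((hT.existsUnique_path r x).unique hp1 hp2)
    have hlen := congrArg SimpleGraph.Walk.length heq
    simp at hlen

end TreeStruct

section Main
variable {V : Type*} [Fintype V] [DecidableEq V]

lemma build {T : SimpleGraph V} [DecidableRel T.Adj] (hT : T.IsTree) {r : V}
    (hecc : ∀ v, T.dist r v ≤ 2) (hdeg : ∀ v, v ≠ r → T.degree v ≤ 2) :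
    ∀ (n : ℕ) (A : Finset V) (C : V → ℕ), A.card ≤ n → r ∉ A → 1 ≤ C r →
      (∀ v, v ≠ r → C v = if v ∈ A then 1 else 0) →
      (∀ x ∈ A, T.dist r x = 2 → ∀ w, T.Adj w x → w ∈ A) →
      Relation.ReflTransGen (CupMove T) C (fun w => if w = r then ∑ v, C v else 0) := by
  intro n
  induction n with
  | zero =>
    intro A C hcard hrA hCr hCA hclose
    have hA : A = ∅ := Finset.card_eq_zero.mp (by omega)
    have hC : C = fun w => if w = r then ∑ v, C v else 0 := by
      funext w
      by_cases hw : w = r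
      · subst hw
        rw [if_pos rfl]
        exact (Finset.sum_eq_single_of_mem w (Finset.mem_univ w)
          (fun b _ hb => by rw [hCA b hb, hA]; simp)).symm
      · rw [if_neg hw, hCA w hw, hA]; simp
    nth_rewrite 1 [hC]
    exact Relation.ReflTransGen.refl
  | succ n ih =>
    intro A C hcard hrA hCr hCA hclose
    by_cases hx2 : ∃ x ∈ A, T.dist r x = 2
    · obtain ⟨x, hxA, hx⟩ := hx2
      obtain ⟨a, hra, hax, huniq⟩ := unique_nbr_of_dist_two hT hecc hx
      have hxr : x ≠ r := fun h => hrA (h ▸ hxA)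
      have har : a ≠ r := hra.ne'
      have haA : a ∈ A := hclose x hxA hx a hax
      have hCx : C x = 1 := by rw [hCA x hxr, if_pos hxA]
      have hCa : C a = 1 := by rw [hCA a har, if_pos haA]
      have haxne : a ≠ x := hax.ne
      set C1 : V → ℕ := fun w => if w = a then 0 else if w = x then C a + C x else C w with hC1
      have m1 : CupMove T C C1 :=
        ⟨a, x, haxne, by omega, by omega,
          by rw [SimpleGraph.dist_eq_one_iff_adj.mpr hax, hCa], fun w => rfl⟩
      have hC1x : C1 x = 2 := by rw [hC1]; simp [Ne.symm haxne, hCa, hCx]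
      have hC1r : C1 r = C r := by rw [hC1]; simp [Ne.symm har, Ne.symm hxr]
      have hC1a : C1 a = 0 := by rw [hC1]; simp
      set C2 : V → ℕ := fun w => if w = x then 0 else if w = r then C1 x + C1 r else C1 w
        with hC2
      have m2 : CupMove T C1 C2 :=
        ⟨x, r, hxr, by omega, by omega,
          by rw [SimpleGraph.dist_comm, hx, hC1x], fun w => rfl⟩
      have hC2r : C2 r = 2 + C r := by
        rw [hC2]; simp [Ne.symm hxr, hC1x, hC1r]
      set A' := (A.erase x).erase a with hA'
      have haA'' : a ∈ A.erase x := Finset.mem_erase.mpr ⟨haxne, haA⟩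
      have hcard' : A'.card ≤ n := by
        have e1 : (A.erase x).card = A.card - 1 := Finset.card_erase_of_mem hxA
        have e2 : A'.card = (A.erase x).card - 1 := Finset.card_erase_of_mem haA''
        have e3 : 1 ≤ A.card := Finset.card_pos.mpr ⟨x, hxA⟩
        omega
      have hrA' : r ∉ A' := by
        intro h
        exact hrA (Finset.mem_of_mem_erase (Finset.mem_of_mem_erase h))
      have hCr' : 1 ≤ C2 r := by omega
      have hCA' : ∀ v, v ≠ r → C2 v = if v ∈ A' then 1 else 0 := by
        intro v hv
        by_cases hvx : v = x
        · subst hvx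
          have : v ∉ A' := by
            intro h
            exact (Finset.mem_erase.mp (Finset.mem_of_mem_erase h)).1 rfl
          rw [if_neg this, hC2]; simp
        · by_cases hva : v = a
          · subst hva
            have : v ∉ A' := by
              intro h
              exact (Finset.mem_erase.mp h).1 rfl
            rw [if_neg this, hC2]
            simp [hvx, hv, hC1a]
          · have hCv : C2 v = C v := by
              rw [hC2]; simp [hvx, hv, hC1, hva]
            rw [hCv, hCA v hv]
            have : v ∈ A' ↔ v ∈ A := by
              rw [hA', Finset.mem_erase, Finset.mem_erase]
              tauto
            by_cases hvA : v ∈ A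
            · rw [if_pos hvA, if_pos (this.mpr hvA)]
            · rw [if_neg hvA, if_neg (fun h => hvA (this.mp h))]
      have hclose' : ∀ x' ∈ A', T.dist r x' = 2 → ∀ w, T.Adj w x' → w ∈ A' := by
        intro x' hx'A hx' w hw
        have hx'x : x' ≠ x := (Finset.mem_erase.mp (Finset.mem_of_mem_erase hx'A)).1
        have hx'a : x' ≠ a := (Finset.mem_erase.mp hx'A).1
        have hx'A0 : x' ∈ A := Finset.mem_of_mem_erase (Finset.mem_of_mem_erase hx'A)
        have hwA : w ∈ A := hclose x' hx'A0 hx' w hw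
        have hx'r : x' ≠ r := fun h => hrA (h ▸ hx'A0)
        have hwx : w ≠ x := by
          rintro rfl
          exact hx'a (huniq x' hw.symm)
        have hwa : w ≠ a := by
          rintro rfl
          have hsub : ({r, x, x'} : Finset V) ⊆ T.neighborFinset w := by
            intro z hz
            simp only [Finset.mem_insert, Finset.mem_singleton] at hz
            rcases hz with rfl | rfl | rfl
            · exact (T.mem_neighborFinset w z).mpr hra.symm
            · exact (T.mem_neighborFinset w z).mpr hax
            · exact (T.mem_neighborFinset w z).mpr hw
          have hc3 : ({r, x, x'} : Finset V).card = 3 := by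
            rw [Finset.card_insert_of_notMem (by simp [Ne.symm hxr, Ne.symm hx'r]),
              Finset.card_insert_of_notMem (by simp [Ne.symm hx'x])]
            rfl
          have := Finset.card_le_card hsub
          rw [hc3, SimpleGraph.card_neighborFinset_eq_degree] at this
          have := hdeg w har
          omega
        exact Finset.mem_erase.mpr ⟨hwa, Finset.mem_erase.mpr ⟨hwx, hwA⟩⟩
      have step := ih A' C2 hcard' hrA' hCr' hCA' hclose'
      have hs : ∑ v, C2 v = ∑ v, C v := by
        rw [cupMove_sum m2, cupMove_sum m1]
      rw [hs] at step
      exact Relation.ReflTransGen.head m1 (Relation.ReflTransGen.head m2 step)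
    · rcases Finset.eq_empty_or_nonempty A with hA | ⟨x, hxA⟩
      · have hC : C = fun w => if w = r then ∑ v, C v else 0 := by
          funext w
          by_cases hw : w = r
          · subst hw
            rw [if_pos rfl]
            exact (Finset.sum_eq_single_of_mem w (Finset.mem_univ w)
              (fun b _ hb => by rw [hCA b hb, hA]; simp)).symm
          · rw [if_neg hw, hCA w hw, hA]; simp
        nth_rewrite 1 [hC]
        exact Relation.ReflTransGen.refl
      · have hxr : x ≠ r := fun h => hrA (h ▸ hxA)
        have hCx : C x = 1 := by rw [hCA x hxr, if_pos hxA]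
        have hd1 : T.dist r x = 1 := by
          have h1 := hecc x
          have h0 : T.dist r x ≠ 0 := fun h0 =>
            hxr (hT.isConnected.dist_eq_zero_iff.mp h0).symm
          have h2 : T.dist r x ≠ 2 := fun h2 => hx2 ⟨x, hxA, h2⟩
          omega
        have hadj : T.Adj r x := SimpleGraph.dist_eq_one_iff_adj.mp hd1
        set C1 : V → ℕ := fun w => if w = x then 0 else if w = r then C x + C r else C w
          with hC1
        have m1 : CupMove T C C1 :=
          ⟨x, r, hxr, by omega, by omega,
            by rw [SimpleGraph.dist_comm, hd1, hCx], fun w => rfl⟩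
        set A' := A.erase x with hA'
        have hcard' : A'.card ≤ n := by
          have e1 : A'.card = A.card - 1 := Finset.card_erase_of_mem hxA
          have e3 : 1 ≤ A.card := Finset.card_pos.mpr ⟨x, hxA⟩
          omega
        have hrA' : r ∉ A' := fun h => hrA (Finset.mem_of_mem_erase h)
        have hCr' : 1 ≤ C1 r := by
          rw [hC1]; simp [Ne.symm hxr]; omega
        have hCA' : ∀ v, v ≠ r → C1 v = if v ∈ A' then 1 else 0 := by
          intro v hv
          by_cases hvx : v = x
          · subst hvx
            rw [if_neg (by simp [hA']), hC1]; simp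
          · have : C1 v = C v := by rw [hC1]; simp [hvx, hv]
            rw [this, hCA v hv]
            have hmem : v ∈ A' ↔ v ∈ A := by
              rw [hA', Finset.mem_erase]; tauto
            by_cases hvA : v ∈ A
            · rw [if_pos hvA, if_pos (hmem.mpr hvA)]
            · rw [if_neg hvA, if_neg (fun h => hvA (hmem.mp h))]
        have hclose' : ∀ x' ∈ A', T.dist r x' = 2 → ∀ w, T.Adj w x' → w ∈ A' := by
          intro x' hx'A hx' w hw
          exact absurd ⟨x', Finset.mem_of_mem_erase hx'A, hx'⟩ hx2
        have step := ih A' C1 hcard' hrA' hCr' hCA' hclose'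
        have hs : ∑ v, C1 v = ∑ v, C v := cupMove_sum m1
        rw [hs] at step
        exact Relation.ReflTransGen.head m1 step


end Main

theorem tree_ecc_two_stackable_iff_spider {V : Type*} [Fintype V] [DecidableEq V]
    (T : SimpleGraph V) [DecidableRel T.Adj] (hT : T.IsTree) (r : V)
    (hecc_le : ∀ v : V, T.dist r v ≤ 2) (hecc_eq : ∃ v : V, T.dist r v = 2) :
    IsStackableAt T r ↔ ∀ v : V, v ≠ r → T.degree v ≤ 2 := by
  have hconn := hT.isConnected
  constructor
  · intro hst v hvr
    by_contra hdegc
    push_neg at hdegc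
    have hdv := hecc_le v
    have hne0 : T.dist r v ≠ 0 := fun h0 => hvr (hconn.dist_eq_zero_iff.mp h0).symm
    have h1 : T.dist r v = 1 := by
      rcases (by omega : T.dist r v = 1 ∨ T.dist r v = 2) with h | h
      · exact h
      · exfalso
        obtain ⟨a, -, -, huniq⟩ := unique_nbr_of_dist_two hT hecc_le h
        have hsub : T.neighborFinset v ⊆ {a} := by
          intro w hw
          rw [Finset.mem_singleton]
          exact huniq w ((T.mem_neighborFinset v w).mp hw).symm
        have hcl := Finset.card_le_card hsub
        rw [Finset.card_singleton, SimpleGraph.card_neighborFinset_eq_degree] at hcl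
        omega
    have hrv : T.Adj r v := SimpleGraph.dist_eq_one_iff_adj.mp h1
    have hmemr : r ∈ T.neighborFinset v := (T.mem_neighborFinset v r).mpr hrv.symm
    have hcard2 : 1 < ((T.neighborFinset v).erase r).card := by
      have e1 : ((T.neighborFinset v).erase r).card = (T.neighborFinset v).card - 1 :=
        Finset.card_erase_of_mem hmemr
      have e2 : (T.neighborFinset v).card = T.degree v :=
        T.card_neighborFinset_eq_degree v
      omega
    obtain ⟨x, hx, y, hy, hxy⟩ := Finset.one_lt_card.mp hcard2
    obtain ⟨hxr, hx'⟩ := Finset.mem_erase.mp hx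
    obtain ⟨hyr, hy'⟩ := Finset.mem_erase.mp hy
    have hvx : T.Adj v x := (T.mem_neighborFinset v x).mp hx'
    have hvy : T.Adj v y := (T.mem_neighborFinset v y).mp hy'
    have hdist2 : ∀ z, z ≠ r → T.Adj v z → T.dist r z = 2 := by
      intro z hzr hvz
      have hle := hecc_le z
      have h0 : T.dist r z ≠ 0 := fun h0 => hzr (hconn.dist_eq_zero_iff.mp h0).symm
      have hne1 : T.dist r z ≠ 1 := by
        intro hd
        exact tree_no_triangle hT hrv hvz (SimpleGraph.dist_eq_one_iff_adj.mp hd)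
      omega
    have hux : ∀ w, T.Adj w x → w = v := by
      obtain ⟨ax, -, hax, hu⟩ := unique_nbr_of_dist_two hT hecc_le (hdist2 x hxr hvx)
      have hva : v = ax := hu v hvx
      intro w hw; rw [hu w hw, ← hva]
    have huy : ∀ w, T.Adj w y → w = v := by
      obtain ⟨ay, -, hay, hu⟩ := unique_nbr_of_dist_two hT hecc_le (hdist2 y hyr hvy)
      have hva : v = ay := hu v hvy
      intro w hw; rw [hu w hw, ← hva]
    have hgood : Good T (fun _ => 1) r := by
      refine good_of_steps hst (good_goal T r ?_)
      haveI : Nonempty V := ⟨r⟩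
      simpa using Nat.succ_le_of_lt (Fintype.card_pos (α := V))
    exact not_good_ones T r hconn hecc_le v x y hvr hxr hyr hxy hvx hvy hux huy hgood
  · intro hdeg
    refine build hT hecc_le hdeg (Fintype.card V) (Finset.univ.erase r) (fun _ => 1)
      ?_ ?_ ?_ ?_ ?_
    · exact Finset.card_le_univ _
    · exact Finset.notMem_erase r _
    · exact le_refl 1
    · intro v hv
      rw [if_pos (Finset.mem_erase.mpr ⟨hv, Finset.mem_univ v⟩)]
    · intro z hz hdz w hw
      refine Finset.mem_erase.mpr ⟨?_, Finset.mem_univ w⟩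
      rintro rfl
      rw [SimpleGraph.dist_eq_one_iff_adj.mpr hw] at hdz
      omega
end

section
/- Let G = K_{a_1,…,a_t} be the complete t-partite graph on n vertices with t ≥ 2 and nonempty parts A_1, …, A_t of sizes a_1, …, a_t (two vertices are adjacent iff they lie in different parts), and let r be a vertex in part A_i. Then G is r-stackable if and only if 2·a_i ≤ n + 1. Consequently, G is stackable if and only if 2·a_i ≤ n + 1 for every i. -/
open SimpleGraph Finset

namespace CupStackAux

variable {t : ℕ} {a : Fin t → ℕ}

/-! ### Distances in the complete multipartite graph -/

lemma cmg_adj (u v : Σ i : Fin t, Fin (a i)) :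
    (completeMultipartiteGraph (fun i => Fin (a i))).Adj u v ↔ u.1 ≠ v.1 := by
  simp [completeMultipartiteGraph]

lemma cmg_dist_ne (u v : Σ i : Fin t, Fin (a i)) (h : u.1 ≠ v.1) :
    (completeMultipartiteGraph (fun i => Fin (a i))).dist u v = 1 :=
  dist_eq_one_iff_adj.mpr ((cmg_adj u v).mpr h)

lemma cmg_dist_eq (ht : 2 ≤ t) (ha : ∀ i, 1 ≤ a i)
    (u v : Σ i : Fin t, Fin (a i)) (h : u.1 = v.1) (hne : u ≠ v) :
    (completeMultipartiteGraph (fun i => Fin (a i))).dist u v = 2 := by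
  set G := completeMultipartiteGraph (fun i => Fin (a i)) with hG
  obtain ⟨j, hj⟩ : ∃ j : Fin t, j ≠ u.1 := by
    rcases Decidable.eq_or_ne (⟨0, by omega⟩ : Fin t) u.1 with h0 | h0
    · exact ⟨⟨1, by omega⟩, by rw [← h0]; simp [Fin.ext_iff]⟩
    · exact ⟨_, h0⟩
  set x : Σ i : Fin t, Fin (a i) := ⟨j, ⟨0, ha j⟩⟩ with hx
  have h1 : G.Adj u x := (cmg_adj u x).mpr (by simpa using (Ne.symm hj))
  have h2 : G.Adj x v := (cmg_adj x v).mpr (by simp [hx, ← h, Ne.symm hj] at *; exact hj)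
  have hle : G.dist u v ≤ 2 := by
    have := SimpleGraph.dist_le (Walk.cons h1 (Walk.cons h2 Walk.nil))
    simpa using this
  have hne1 : G.dist u v ≠ 1 := by
    intro hd
    exact ((cmg_adj u v).mp (dist_eq_one_iff_adj.mp hd)) h
  have hne0 : G.dist u v ≠ 0 := by
    have hr : G.Reachable u v := (h1.reachable).trans h2.reachable
    intro hd
    exact hne (hr.dist_eq_zero_iff.mp hd)
  omega

/-! ### Sums under a cup move -/

lemma sum_diff_two {V : Type*} [Fintype V] [DecidableEq V] (C C' : V → ℕ) (u v : V)
    (huv : u ≠ v)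
    (hC' : ∀ w, C' w = if w = u then 0 else if w = v then C u + C v else C w)
    (g : V → ℕ → ℤ) :
    ∑ w, g w (C' w) =
      ∑ w, g w (C w) + (g u 0 - g u (C u)) + (g v (C u + C v) - g v (C v)) := by
  have hu : C' u = 0 := by rw [hC' u]; simp
  have hv : C' v = C u + C v := by rw [hC' v]; simp [Ne.symm huv]
  have hsub : ∑ w, (g w (C' w) - g w (C w)) =
      ∑ w ∈ ({u, v} : Finset V), (g w (C' w) - g w (C w)) := by
    refine (Finset.sum_subset (Finset.subset_univ _) ?_).symm
    intro x _ hx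
    simp only [Finset.mem_insert, Finset.mem_singleton, not_or] at hx
    rw [hC' x, if_neg hx.1, if_neg hx.2, sub_self]
  have hpair : ∑ w ∈ ({u, v} : Finset V), (g w (C' w) - g w (C w)) =
      (g u (C' u) - g u (C u)) + (g v (C' v) - g v (C v)) :=
    Finset.sum_pair huv
  have hd := Finset.sum_sub_distrib (s := (univ : Finset V))
    (f := fun w => g w (C' w)) (g := fun w => g w (C w))
  rw [hu, hv] at hpair
  rw [hsub, hpair] at hd
  linarith

lemma CupMove.sum_eq {V : Type*} [Fintype V] [DecidableEq V] {G : SimpleGraph V}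
    {C C' : V → ℕ} (h : CupMove G C C') : ∑ v, C' v = ∑ v, C v := by
  obtain ⟨u, v, huv, hu, hv, hdist, hC'⟩ := h
  have := sum_diff_two C C' u v huv hC' (fun _ c => (c : ℤ))
  have hcast : ((∑ v, C' v : ℕ) : ℤ) = ((∑ v, C v : ℕ) : ℤ) := by
    push_cast
    rw [this]
    push_cast
    ring
  exact_mod_cast hcast

/-! ### The potential function -/

/-- Potential of vertex `v` holding `c` cups, relative to the root `r`. -/
def theta (r v : Σ i : Fin t, Fin (a i)) (c : ℕ) : ℤ :=
  if v.1 = r.1 then 2 * c - (if v = r then 0 else if c = 1 ∨ 3 ≤ c then 1 else 0)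
  else if c = 0 then 0 else 3

set_option maxHeartbeats 1000000 in
lemma theta_mono (ht : 2 ≤ t) (ha : ∀ i, 1 ≤ a i) (r : Σ i : Fin t, Fin (a i))
    (C C' : (Σ i : Fin t, Fin (a i)) → ℕ)
    (h : CupMove (completeMultipartiteGraph (fun i => Fin (a i))) C C') :
    ∑ w, theta r w (C' w) ≤ ∑ w, theta r w (C w) := by
  obtain ⟨u, v, huv, hu, hv, hdist, hC'⟩ := h
  rw [sum_diff_two C C' u v huv hC' (theta r)]
  have key : (theta r u 0 - theta r u (C u)) +
      (theta r v (C u + C v) - theta r v (C v)) ≤ 0 := by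
    have hCu : C u = 1 ∨ (C u = 2 ∧ u.1 = v.1) := by
      rcases Decidable.eq_or_ne u.1 v.1 with hfst | hfst
      · exact Or.inr ⟨by rw [← hdist, cmg_dist_eq ht ha u v hfst huv], hfst⟩
      · exact Or.inl (by rw [← hdist, cmg_dist_ne u v hfst])
    simp only [theta]
    rcases hCu with ⟨hCu⟩ | ⟨hCu, hfst⟩ <;>
      split_ifs <;> push_cast <;>
        first
          | omega
          | (exfalso; subst_vars; simp_all)
  linarith

set_option maxHeartbeats 1000000 in
lemma theta_mono_rtg (ht : 2 ≤ t) (ha : ∀ i, 1 ≤ a i) (r : Σ i : Fin t, Fin (a i))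
    {C D : (Σ i : Fin t, Fin (a i)) → ℕ}
    (h : Relation.ReflTransGen
      (CupMove (completeMultipartiteGraph (fun i => Fin (a i)))) C D) :
    ∑ w, theta r w (D w) ≤ ∑ w, theta r w (C w) := by
  induction h with
  | refl => exact le_rfl
  | tail _ hbc ih => exact (theta_mono ht ha r _ _ hbc).trans ih

lemma card_part (r : Σ i : Fin t, Fin (a i)) :
    (Finset.univ.filter (fun v : Σ i : Fin t, Fin (a i) => v.1 = r.1)).card = a r.1 := by
  rw [Finset.card_filter, ← Finset.univ_sigma_univ, Finset.sum_sigma]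
  have h1 : ∀ i : Fin t, ∑ j : Fin (a i),
      (if (⟨i, j⟩ : Σ i : Fin t, Fin (a i)).1 = r.1 then 1 else 0) =
      if i = r.1 then a i else 0 := by
    intro i
    split_ifs with h <;> simp [h]
  rw [Finset.sum_congr rfl fun i _ => h1 i,
    Finset.sum_ite_eq' Finset.univ r.1 a, if_pos (Finset.mem_univ _)]

lemma card_univ_sigma : Fintype.card (Σ i : Fin t, Fin (a i)) = ∑ i, a i := by
  simp [Fintype.card_sigma]

lemma theta_one_sum (r : Σ i : Fin t, Fin (a i)) :
    ∑ v, theta r v 1 = 3 * (∑ i, (a i : ℤ)) - 2 * a r.1 + 1 := by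
  have hpt : ∀ v : Σ i : Fin t, Fin (a i), theta r v 1 =
      3 - 2 * (if v.1 = r.1 then (1 : ℤ) else 0) + (if v = r then 1 else 0) := by
    intro v
    simp only [theta]
    split_ifs <;> first | omega | (exfalso; subst_vars; simp_all)
  have hpart : ∑ v : Σ i : Fin t, Fin (a i),
      (if v.1 = r.1 then (1 : ℤ) else 0) = a r.1 := by
    rw [Finset.sum_boole, card_part]
  rw [Finset.sum_congr rfl (fun v _ => hpt v)]
  rw [Finset.sum_add_distrib, Finset.sum_sub_distrib, ← Finset.mul_sum, hpart,
    Finset.sum_const, Finset.sum_ite_eq' Finset.univ r (fun _ => (1 : ℤ)),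
    if_pos (Finset.mem_univ r), Finset.card_univ, card_univ_sigma]
  rw [nsmul_eq_mul, Nat.cast_sum]
  ring

lemma theta_final_sum (r : Σ i : Fin t, Fin (a i)) (n : ℕ) :
    ∑ v, theta r v (if v = r then n else 0) = 2 * n := by
  have hpt : ∀ v : Σ i : Fin t, Fin (a i),
      theta r v (if v = r then n else 0) = if v = r then 2 * (n : ℤ) else 0 := by
    intro v
    rcases Decidable.eq_or_ne v r with h | h
    · subst h; simp [theta]
    · simp [theta, h]
  rw [Finset.sum_congr rfl (fun v _ => hpt v),
    Finset.sum_ite_eq' Finset.univ r (fun _ => 2 * (n : ℤ)), if_pos (Finset.mem_univ r)]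

/-! ### Sufficiency -/

variable (r : Σ i : Fin t, Fin (a i))

/-- occupied vertices in the part of `r`, other than `r` itself -/
def insideF (C : (Σ i : Fin t, Fin (a i)) → ℕ) : Finset (Σ i : Fin t, Fin (a i)) :=
  Finset.univ.filter (fun v => v.1 = r.1 ∧ v ≠ r ∧ C v = 1)

/-- occupied vertices outside the part of `r` -/
def outsideF (C : (Σ i : Fin t, Fin (a i)) → ℕ) : Finset (Σ i : Fin t, Fin (a i)) :=
  Finset.univ.filter (fun v => v.1 ≠ r.1 ∧ C v = 1)

lemma done_of (C : (Σ i : Fin t, Fin (a i)) → ℕ)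
    (h0 : ∀ v, v ≠ r → C v = 0) :
    Relation.ReflTransGen (CupMove (completeMultipartiteGraph (fun i => Fin (a i))))
      C (fun w => if w = r then ∑ v, C v else 0) := by
  have hC : C = fun w => if w = r then ∑ v, C v else 0 := by
    funext w
    rcases Decidable.eq_or_ne w r with h | h
    · subst h
      rw [if_pos rfl]
      exact (Finset.sum_eq_single w (fun b _ hb => h0 b hb)
        (fun h => absurd (Finset.mem_univ w) h)).symm
    · rw [if_neg h, h0 w h]
  exact hC ▸ Relation.ReflTransGen.refl

lemma suff (ht : 2 ≤ t) (ha : ∀ i, 1 ≤ a i) :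
    ∀ m (C : (Σ i : Fin t, Fin (a i)) → ℕ), 1 ≤ C r → (∀ v, v ≠ r → C v ≤ 1) →
    (insideF r C).card ≤ (outsideF r C).card → (outsideF r C).card ≤ m →
    Relation.ReflTransGen (CupMove (completeMultipartiteGraph (fun i => Fin (a i))))
      C (fun w => if w = r then ∑ v, C v else 0) := by
  set G := completeMultipartiteGraph (fun i => Fin (a i)) with hG
  intro m
  induction m with
  | zero =>
    intro C hr hb hio hom
    refine done_of r C (fun v hv => ?_)
    by_contra hne
    have h1 : C v = 1 := by have := hb v hv; omega
    rcases Decidable.eq_or_ne v.1 r.1 with hf | hf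
    · have : v ∈ insideF r C := by
        simp only [insideF, Finset.mem_filter, Finset.mem_univ, true_and]
        exact ⟨hf, hv, h1⟩
      have := Finset.card_pos.mpr ⟨v, this⟩
      omega
    · have : v ∈ outsideF r C := by
        simp only [outsideF, Finset.mem_filter, Finset.mem_univ, true_and]
        exact ⟨hf, h1⟩
      have := Finset.card_pos.mpr ⟨v, this⟩
      omega
  | succ m ih =>
    intro C hr hb hio hom
    rcases Finset.eq_empty_or_nonempty (outsideF r C) with hoe | ⟨w, hw⟩
    · -- no occupied vertex outside: done as in base case
      have hie : (insideF r C).card = 0 := by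
        rw [hoe] at hio; simpa using hio
      refine done_of r C (fun v hv => ?_)
      by_contra hne
      have h1 : C v = 1 := by have := hb v hv; omega
      rcases Decidable.eq_or_ne v.1 r.1 with hf | hf
      · have : v ∈ insideF r C := by
          simp only [insideF, Finset.mem_filter, Finset.mem_univ, true_and]
          exact ⟨hf, hv, h1⟩
        have := Finset.card_pos.mpr ⟨v, this⟩
        omega
      · have : v ∈ outsideF r C := by
          simp only [outsideF, Finset.mem_filter, Finset.mem_univ, true_and]
          exact ⟨hf, h1⟩
        rw [hoe] at this
        simp at this
    · simp only [outsideF, Finset.mem_filter, Finset.mem_univ, true_and] at hw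
      obtain ⟨hwf, hwC⟩ := hw
      have hwmem : w ∈ outsideF r C := by
        simp only [outsideF, Finset.mem_filter, Finset.mem_univ, true_and]
        exact ⟨hwf, hwC⟩
      have hwr : w ≠ r := fun h => hwf (h ▸ rfl)
      rcases Finset.eq_empty_or_nonempty (insideF r C) with hine | ⟨u, hu⟩
      · -- move the cup at w directly onto r
        set C₁ : (Σ i : Fin t, Fin (a i)) → ℕ :=
          fun x => if x = w then 0 else if x = r then C w + C r else C x with hC₁
        have hmove : CupMove G C C₁ :=
          ⟨w, r, hwr, by omega, hr, by rw [cmg_dist_ne w r hwf, hwC], fun x => rfl⟩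
        have hC₁r : C₁ r = C w + C r := by
          rw [hC₁]; simp [Ne.symm hwr]
        have hC₁v : ∀ v, v ≠ w → v ≠ r → C₁ v = C v := by
          intro v h1 h2; rw [hC₁]; simp [h1, h2]
        have hins : insideF r C₁ = ∅ := by
          rw [← hine]
          ext v
          simp only [insideF, Finset.mem_filter, Finset.mem_univ, true_and]
          constructor
          · rintro ⟨h1, h2, h3⟩
            have hvw : v ≠ w := fun h => hwf (h ▸ h1)
            rw [hC₁v v hvw h2] at h3
            exact ⟨h1, h2, h3⟩
          · rintro ⟨h1, h2, h3⟩
            have hvw : v ≠ w := fun h => hwf (h ▸ h1)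
            rw [← hC₁v v hvw h2] at h3
            exact ⟨h1, h2, h3⟩
        have hout : outsideF r C₁ = (outsideF r C).erase w := by
          ext v
          simp only [outsideF, Finset.mem_filter, Finset.mem_univ, true_and,
            Finset.mem_erase]
          constructor
          · rintro ⟨h1, h3⟩
            have hvw : v ≠ w := by
              intro h; subst h
              rw [hC₁] at h3; simp at h3
            have hvr : v ≠ r := fun h => h1 (h ▸ rfl)
            rw [hC₁v v hvw hvr] at h3
            exact ⟨hvw, h1, h3⟩
          · rintro ⟨hvw, h1, h3⟩
            have hvr : v ≠ r := fun h => h1 (h ▸ rfl)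
            rw [← hC₁v v hvw hvr] at h3
            exact ⟨h1, h3⟩
        have hrec := ih C₁ (by omega)
          (by
            intro v hv
            have hrw : C₁ v = if v = w then 0 else if v = r then C w + C r else C v := rfl
            rw [hrw]
            split_ifs with h1
            · omega
            · exact hb v hv)
          (by rw [hins, hout]; simp)
          (by rw [hout, Finset.card_erase_of_mem hwmem]; omega)
        have hsum : ∑ v, C₁ v = ∑ v, C v := CupMove.sum_eq hmove
        rw [hsum] at hrec
        exact Relation.ReflTransGen.head hmove hrec
      · -- move the cup at w onto u, then the two cups at u onto r
        simp only [insideF, Finset.mem_filter, Finset.mem_univ, true_and] at hu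
        obtain ⟨huf, hur, huC⟩ := hu
        have humem : u ∈ insideF r C := by
          simp only [insideF, Finset.mem_filter, Finset.mem_univ, true_and]
          exact ⟨huf, hur, huC⟩
        have hwu : w ≠ u := fun h => hwf (h ▸ huf)
        have hwrne : r ≠ w := Ne.symm hwr
        set C₁ : (Σ i : Fin t, Fin (a i)) → ℕ :=
          fun x => if x = w then 0 else if x = u then C w + C u else C x with hC₁
        have hmove1 : CupMove G C C₁ :=
          ⟨w, u, hwu, by omega, by omega,
            by rw [cmg_dist_ne w u (fun h => hwf (h ▸ huf)), hwC], fun x => rfl⟩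
        have hC₁u : C₁ u = 2 := by
          rw [hC₁]; simp [Ne.symm hwu, hwC, huC]
        have hC₁r : C₁ r = C r := by
          rw [hC₁]; simp [hwrne, Ne.symm hur]
        set C₂ : (Σ i : Fin t, Fin (a i)) → ℕ :=
          fun x => if x = u then 0 else if x = r then C₁ u + C₁ r else C₁ x with hC₂
        have hmove2 : CupMove G C₁ C₂ :=
          ⟨u, r, hur, by omega, by omega,
            by rw [cmg_dist_eq ht ha u r huf hur, hC₁u], fun x => rfl⟩
        have hC₂r : C₂ r = 2 + C r := by
          rw [hC₂]; simp [Ne.symm hur, hC₁u, hC₁r]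
        have hC₂v : ∀ v, v ≠ u → v ≠ r → v ≠ w → C₂ v = C v := by
          intro v h1 h2 h3
          rw [hC₂, hC₁]; simp [h1, h2, h3]
        have hC₂u : C₂ u = 0 := by rw [hC₂]; simp
        have hC₂w : C₂ w = 0 := by
          rw [hC₂, hC₁]; simp [hwu, hwrne.symm]
        have hins : insideF r C₂ = (insideF r C).erase u := by
          ext v
          simp only [insideF, Finset.mem_filter, Finset.mem_univ, true_and,
            Finset.mem_erase]
          constructor
          · rintro ⟨h1, h2, h3⟩
            have hvu : v ≠ u := by intro h; subst h; rw [hC₂u] at h3; omega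
            have hvw : v ≠ w := fun h => hwf (h ▸ h1)
            rw [hC₂v v hvu h2 hvw] at h3
            exact ⟨hvu, h1, h2, h3⟩
          · rintro ⟨hvu, h1, h2, h3⟩
            have hvw : v ≠ w := fun h => hwf (h ▸ h1)
            rw [← hC₂v v hvu h2 hvw] at h3
            exact ⟨h1, h2, h3⟩
        have hout : outsideF r C₂ = (outsideF r C).erase w := by
          ext v
          simp only [outsideF, Finset.mem_filter, Finset.mem_univ, true_and,
            Finset.mem_erase]
          constructor
          · rintro ⟨h1, h3⟩
            have hvw : v ≠ w := by intro h; subst h; rw [hC₂w] at h3; omega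
            have hvr : v ≠ r := fun h => h1 (h ▸ rfl)
            have hvu : v ≠ u := fun h => h1 (h ▸ huf)
            rw [hC₂v v hvu hvr hvw] at h3
            exact ⟨hvw, h1, h3⟩
          · rintro ⟨hvw, h1, h3⟩
            have hvr : v ≠ r := fun h => h1 (h ▸ rfl)
            have hvu : v ≠ u := fun h => h1 (h ▸ huf)
            rw [← hC₂v v hvu hvr hvw] at h3
            exact ⟨h1, h3⟩
        have hrec := ih C₂ (by omega)
          (by
            intro v hv
            rcases Decidable.eq_or_ne v u with h1 | h1
            · subst h1; omega
            rcases Decidable.eq_or_ne v w with h2 | h2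
            · subst h2; omega
            rw [hC₂v v h1 hv h2]
            exact hb v hv)
          (by
            rw [hins, hout, Finset.card_erase_of_mem humem,
              Finset.card_erase_of_mem hwmem]
            omega)
          (by rw [hout, Finset.card_erase_of_mem hwmem]; omega)
        have hsum : ∑ v, C₂ v = ∑ v, C v := by
          rw [CupMove.sum_eq hmove2, CupMove.sum_eq hmove1]
        rw [hsum] at hrec
        exact Relation.ReflTransGen.head hmove1 (Relation.ReflTransGen.head hmove2 hrec)

end CupStackAux

theorem completeMultipartite_stackable (t : ℕ) (ht : 2 ≤ t) (a : Fin t → ℕ)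
    (ha : ∀ i, 1 ≤ a i) :
    (∀ r : Σ i : Fin t, Fin (a i),
        IsStackableAt (SimpleGraph.completeMultipartiteGraph (fun i => Fin (a i))) r ↔
          2 * a r.1 ≤ (∑ i, a i) + 1) ∧
    (IsStackable (SimpleGraph.completeMultipartiteGraph (fun i => Fin (a i))) ↔
      ∀ i : Fin t, 2 * a i ≤ (∑ i, a i) + 1) := by
  have hsum1 : (∑ _v : Σ i : Fin t, Fin (a i), (1 : ℕ)) = ∑ i, a i := by
    simp [Finset.card_univ, CupStackAux.card_univ_sigma]
  have main : ∀ r : Σ i : Fin t, Fin (a i),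
      IsStackableAt (SimpleGraph.completeMultipartiteGraph (fun i => Fin (a i))) r ↔
        2 * a r.1 ≤ (∑ i, a i) + 1 := by
    intro r
    constructor
    · intro h
      have h2 := h
      unfold IsStackableAt IsStackableConf at h2
      have hm := CupStackAux.theta_mono_rtg ht ha r h2
      rw [CupStackAux.theta_final_sum r, CupStackAux.theta_one_sum r] at hm
      rw [hsum1] at hm
      have hc : (∑ i, (a i : ℤ)) = ((∑ i, a i : ℕ) : ℤ) := by push_cast; ring
      rw [hc] at hm
      omega
    · intro h
      unfold IsStackableAt IsStackableConf
      have hin : (CupStackAux.insideF r fun _ => 1) =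
          (Finset.univ.filter (fun v : Σ i : Fin t, Fin (a i) => v.1 = r.1)).erase r := by
        ext v
        simp only [CupStackAux.insideF, Finset.mem_filter, Finset.mem_univ, true_and,
          Finset.mem_erase]
        tauto
      have hincard : (CupStackAux.insideF r fun _ => 1).card = a r.1 - 1 := by
        rw [hin, Finset.card_erase_of_mem (by simp), CupStackAux.card_part]
      have hofilter : (CupStackAux.outsideF r fun _ => 1) =
          Finset.univ.filter (fun v : Σ i : Fin t, Fin (a i) => ¬v.1 = r.1) := by
        ext v
        simp [CupStackAux.outsideF]
      have hpn := Finset.card_filter_add_card_filter_not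
        (s := (Finset.univ : Finset (Σ i : Fin t, Fin (a i))))
        (p := fun v => v.1 = r.1)
      rw [CupStackAux.card_part, Finset.card_univ, CupStackAux.card_univ_sigma] at hpn
      have houtcard : (CupStackAux.outsideF r fun _ => 1).card = (∑ i, a i) - a r.1 := by
        rw [hofilter]; omega
      refine CupStackAux.suff r ht ha (CupStackAux.outsideF r fun _ => 1).card
        (fun _ => 1) le_rfl (fun _ _ => le_rfl) ?_ le_rfl
      rw [hincard, houtcard]
      have := ha r.1
      omega
  refine ⟨main, ?_, fun h r => (main r).mpr (h r.1)⟩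
  intro h i
  exact (main ⟨i, ⟨0, ha i⟩⟩).mp (h ⟨i, ⟨0, ha i⟩⟩)
end

section
/- Let G be a finite connected simple graph and r a vertex of eccentricity 2 (max over vertices v of dist_G(r,v) equals 2). If G has a Hamiltonian path (a path visiting every vertex of G exactly once), then G is r-stackable. -/
private lemma segment_lemma {V : Type*} [Fintype V] [DecidableEq V]
    (G : SimpleGraph V) (r : V) :
    ∀ (n : ℕ) (s : List V) (C : V → ℕ), s.length ≤ n → s.Nodup →
      List.IsChain G.Adj s → r ∉ s →
      (∀ x ∈ s, C x = 1) → 1 ≤ C r →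
      (∀ x ∈ s, G.dist r x ≤ 2) → (∀ x ∈ s, 1 ≤ G.dist r x) →
      (∀ x ∈ s.getLast?, G.dist r x = 1) →
      Relation.ReflTransGen (CupMove G)
        C (fun w => if w = r then C r + s.length else if w ∈ s then 0 else C w) := by
  intro n
  induction n with
  | zero =>
    intro s C hlen _ _ _ _ _ _ _ _
    have hs : s = [] := List.eq_nil_of_length_eq_zero (Nat.le_zero.mp hlen)
    subst hs
    have : (fun w => if w = r then C r + ([] : List V).length else
        if w ∈ ([] : List V) then 0 else C w) = C := by
      funext w
      by_cases hw : w = r <;> simp [hw]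
    rw [this]
  | succ n ih =>
    intro s C hlen hnd hch hrs h1 hCr hd2 hd1 hlast
    match s with
    | [] =>
      have : (fun w => if w = r then C r + ([] : List V).length else
          if w ∈ ([] : List V) then 0 else C w) = C := by
        funext w
        by_cases hw : w = r <;> simp [hw]
      rw [this]
    | h :: t =>
      have hhr : h ≠ r := fun e => hrs (e ▸ List.mem_cons_self)
      have hht : h ∉ t := (List.nodup_cons.mp hnd).1
      have hrt : r ∉ t := fun e => hrs (List.mem_cons_of_mem _ e)
      have hCh : C h = 1 := h1 h (List.mem_cons_self)
      by_cases hcase : G.dist r h = 1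
      · -- ship the single cup at h directly to r
        set C' : V → ℕ := fun w => if w = h then 0 else if w = r then C h + C r else C w
          with hC'
        have move : CupMove G C C' := by
          refine ⟨h, r, hhr, by omega, hCr, ?_, fun w => rfl⟩
          rw [SimpleGraph.dist_comm, hcase, hCh]
        have hC'r : C' r = C h + C r := by simp [hC', Ne.symm hhr]
        have hC't : ∀ x ∈ t, C' x = 1 := by
          intro x hx
          have hxh : x ≠ h := fun e => hht (e ▸ hx)
          have hxr : x ≠ r := fun e => hrt (e ▸ hx)
          simp [hC', hxh, hxr, h1 x (List.mem_cons_of_mem _ hx)]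
        have hlast' : ∀ x ∈ t.getLast?, G.dist r x = 1 := by
          intro x hx
          match t, hx with
          | b :: t', hx =>
            exact hlast x (by rwa [List.getLast?_cons_cons])
        have hrec := ih t C' (by simpa using Nat.le_of_succ_le_succ hlen)
          (List.nodup_cons.mp hnd).2 hch.tail hrt hC't (by omega)
          (fun x hx => hd2 x (List.mem_cons_of_mem _ hx))
          (fun x hx => hd1 x (List.mem_cons_of_mem _ hx)) hlast'
        refine Relation.ReflTransGen.head move ?_
        have : (fun w => if w = r then C' r + t.length else if w ∈ t then 0 else C' w)
            = (fun w => if w = r then C r + (h :: t).length else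
                if w ∈ h :: t then 0 else C w) := by
          funext w
          by_cases hw : w = r
          · subst hw
            simp only [eq_self_iff_true, if_true, hC'r, hCh, List.length_cons]
            omega
          · by_cases hwh : w = h
            · subst hwh
              simp [hw, hht, hC']
            · by_cases hwt : w ∈ t
              · simp [hw, hwt, hwh]
              · have : w ∉ h :: t := by simp [hwh, hwt]
                simp [hw, hwt, hwh, this, hC']
        rw [← this]
        exact hrec
      · -- dist r h = 2 : grab the next cup, ship a pile of 2
        have hdist2 : G.dist r h = 2 := by
          have := hd2 h (List.mem_cons_self)
          have := hd1 h (List.mem_cons_self)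
          omega
        match t with
        | [] =>
          exfalso
          have := hlast h (by simp)
          omega
        | h2 :: t2 =>
          have hh2t : h2 ∉ t2 := (List.nodup_cons.mp (List.nodup_cons.mp hnd).2).1
          have hhh2 : h ≠ h2 := fun e => hht (e ▸ List.mem_cons_self)
          have hh2r : h2 ≠ r := fun e => hrt (e ▸ List.mem_cons_self)
          have hht2 : h ∉ t2 := fun e => hht (List.mem_cons_of_mem _ e)
          have hrt2 : r ∉ t2 := fun e => hrt (List.mem_cons_of_mem _ e)
          have hCh2 : C h2 = 1 := h1 h2 (List.mem_cons_of_mem _ (List.mem_cons_self))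
          have hadj : G.Adj h h2 := List.isChain_cons_cons.mp hch |>.1
          -- move 1 : h2 → h
          set C1 : V → ℕ := fun w => if w = h2 then 0 else if w = h then C h2 + C h else C w
            with hC1
          have move1 : CupMove G C C1 := by
            refine ⟨h2, h, Ne.symm hhh2, by omega, by omega, ?_, fun w => rfl⟩
            rw [SimpleGraph.dist_comm, SimpleGraph.dist_eq_one_iff_adj.mpr hadj, hCh2]
          have hC1h : C1 h = 2 := by simp [hC1, hhh2, hCh, hCh2]
          have hC1r : C1 r = C r := by simp [hC1, Ne.symm hh2r, Ne.symm hhr]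
          -- move 2 : h (pile of 2) → r
          set C2 : V → ℕ := fun w => if w = h then 0 else if w = r then C1 h + C1 r else C1 w
            with hC2
          have move2 : CupMove G C1 C2 := by
            refine ⟨h, r, hhr, by omega, by omega, ?_, fun w => rfl⟩
            rw [SimpleGraph.dist_comm, hdist2, hC1h]
          have hC2r : C2 r = 2 + C r := by simp [hC2, Ne.symm hhr, hC1h, hC1r]
          have hC2t : ∀ x ∈ t2, C2 x = 1 := by
            intro x hx
            have hxh : x ≠ h := fun e => hht2 (e ▸ hx)
            have hxh2 : x ≠ h2 := fun e => hh2t (e ▸ hx)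
            have hxr : x ≠ r := fun e => hrt2 (e ▸ hx)
            simp [hC2, hC1, hxh, hxh2, hxr,
              h1 x (List.mem_cons_of_mem _ (List.mem_cons_of_mem _ hx))]
          have hlast' : ∀ x ∈ t2.getLast?, G.dist r x = 1 := by
            intro x hx
            match t2, hx with
            | b :: t', hx =>
              refine hlast x ?_
              rw [List.getLast?_cons_cons, List.getLast?_cons_cons]
              exact hx
          have hlen' : t2.length ≤ n := by
            simp only [List.length_cons] at hlen
            omega
          have hrec := ih t2 C2 hlen'
            (List.nodup_cons.mp (List.nodup_cons.mp hnd).2).2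
            (hch.tail.tail) hrt2 hC2t (by omega)
            (fun x hx => hd2 x (List.mem_cons_of_mem _ (List.mem_cons_of_mem _ hx)))
            (fun x hx => hd1 x (List.mem_cons_of_mem _ (List.mem_cons_of_mem _ hx)))
            hlast'
          refine Relation.ReflTransGen.head move1 (Relation.ReflTransGen.head move2 ?_)
          have : (fun w => if w = r then C2 r + t2.length else if w ∈ t2 then 0 else C2 w)
              = (fun w => if w = r then C r + (h :: h2 :: t2).length else
                  if w ∈ h :: h2 :: t2 then 0 else C w) := by
            funext w
            by_cases hw : w = r
            · subst hw
              simp only [eq_self_iff_true, if_true, hC2r, List.length_cons]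
              omega
            · by_cases hwh : w = h
              · subst hwh
                simp [hw, hht2, hC2]
              · by_cases hwh2 : w = h2
                · subst hwh2
                  simp [hw, hh2t, hC2, hC1, hwh]
                · by_cases hwt : w ∈ t2
                  · simp [hw, hwt, hwh, hwh2]
                  · have : w ∉ h :: h2 :: t2 := by simp [hwh, hwh2, hwt]
                    simp [hw, hwt, hwh, hwh2, this, hC2, hC1]
          rw [← this]
          exact hrec

theorem hamiltonianPath_ecc_two_stackable {V : Type*} [Fintype V] [DecidableEq V]
    (G : SimpleGraph V) (hG : G.Connected) (r : V)
    (hecc_le : ∀ v : V, G.dist r v ≤ 2) (hecc_eq : ∃ v : V, G.dist r v = 2)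
    (hham : ∃ (u v : V) (p : G.Walk u v), p.IsHamiltonian) :
    IsStackableAt G r := by
  obtain ⟨u, v, p, hp⟩ := hham
  have hnd : p.support.Nodup := hp.isPath.support_nodup
  have hmem : ∀ x, x ∈ p.support := fun x => hp.mem_support x
  have hchain : List.IsChain G.Adj p.support := p.isChain_adj_support
  obtain ⟨L, R, hsplit⟩ := List.append_of_mem (hmem r)
  rw [hsplit] at hnd hchain
  rw [List.nodup_append] at hnd
  obtain ⟨hndL, hndrR, hdisj⟩ := hnd
  have hrL : r ∉ L := fun h => hdisj r h r List.mem_cons_self rfl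
  have hLR : ∀ x ∈ L, x ∉ R := fun x hx hxR => hdisj x hx x (List.mem_cons_of_mem _ hxR) rfl
  have hrR : r ∉ R := (List.nodup_cons.mp hndrR).1
  have hndR : R.Nodup := (List.nodup_cons.mp hndrR).2
  rw [List.isChain_append] at hchain
  obtain ⟨hchL, hchrR, hadjLr⟩ := hchain
  have hchR : List.IsChain G.Adj R := (List.isChain_cons.mp hchrR).2
  have hadjrR : ∀ y ∈ R.head?, G.Adj r y := (List.isChain_cons.mp hchrR).1
  -- distance facts
  have hd1 : ∀ x : V, x ≠ r → 1 ≤ G.dist r x := fun x hx =>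
    hG.pos_dist_of_ne (Ne.symm hx)
  have hneL : ∀ x ∈ L, x ≠ r := fun x hx e => hrL (e ▸ hx)
  have hneR : ∀ x ∈ R, x ≠ r := fun x hx e => hrR (e ▸ hx)
  -- first segment : L, processed from the far end
  set C1 : V → ℕ := fun w => if w = r then 1 + L.length else if w ∈ L then 0 else 1 with hC1
  have step1 : Relation.ReflTransGen (CupMove G) (fun _ => 1) C1 := by
    have := segment_lemma G r L.length L (fun _ => 1) le_rfl hndL hchL hrL
      (fun x _ => rfl) le_rfl (fun x _ => hecc_le x) (fun x hx => hd1 x (hneL x hx))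
      (fun x hx => by
        have hadj : G.Adj x r := hadjLr x hx r rfl
        rw [SimpleGraph.dist_comm]
        exact SimpleGraph.dist_eq_one_iff_adj.mpr hadj)
    exact this
  -- second segment : R reversed, processed from the far end
  set C2 : V → ℕ := fun w => if w = r then C1 r + R.reverse.length
      else if w ∈ R.reverse then 0 else C1 w with hC2
  have step2 : Relation.ReflTransGen (CupMove G) C1 C2 := by
    refine segment_lemma G r R.reverse.length R.reverse C1 le_rfl (List.nodup_reverse.mpr hndR)
      (List.isChain_reverse.mpr (hchR.imp fun a b h => h.symm))
      (by simpa using hrR) ?_ ?_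
      (fun x hx => hecc_le x)
      (fun x hx => hd1 x (hneR x (List.mem_reverse.mp hx)))
      ?_
    · intro x hx
      have hxR : x ∈ R := List.mem_reverse.mp hx
      have hxr : x ≠ r := hneR x hxR
      have hxL : x ∉ L := fun hxL => hLR x hxL hxR
      simp [hC1, hxr, hxL]
    · simp [hC1]
    · intro x hx
      rw [List.getLast?_reverse] at hx
      have hadj : G.Adj r x := hadjrR x hx
      exact SimpleGraph.dist_eq_one_iff_adj.mpr hadj
  have hcard : Fintype.card V = L.length + R.length + 1 := by
    have h1 : p.support.toFinset = Finset.univ :=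
      Finset.eq_univ_iff_forall.mpr fun x => List.mem_toFinset.mpr (hmem x)
    have h2 : p.support.toFinset.card = p.support.length := by
      rw [hsplit] at *
      exact List.toFinset_card_of_nodup (by rw [List.nodup_append]; exact ⟨hndL, hndrR, hdisj⟩)
    have h3 : p.support.length = L.length + (R.length + 1) := by
      rw [hsplit]; simp
    rw [h1, Finset.card_univ] at h2
    omega
  have hfinal : C2 = (fun w => if w = r then ∑ v : V, (fun _ => 1 : V → ℕ) v else 0) := by
    funext w
    by_cases hw : w = r
    · subst hw
      have : ∑ v : V, (1 : ℕ) = Fintype.card V := by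
        simp
      simp only [hC2, hC1, eq_self_iff_true, if_true, this, List.length_reverse]
      omega
    · have hwl : w ∈ L ++ r :: R := hsplit ▸ hmem w
      rw [List.mem_append, List.mem_cons] at hwl
      rcases hwl with hwL | hwr | hwR
      · have hwR : w ∉ R.reverse := by
          rw [List.mem_reverse]; exact hLR w hwL
        simp [hC2, hC1, hw, hwR, hwL]
      · exact absurd hwr hw
      · simp [hC2, hw, List.mem_reverse, hwR]
  rw [IsStackableAt, IsStackableConf, ← hfinal]
  exact step1.trans step2
end
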